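/- arXiv:2202.03790 — 6 statements merged into one kernel-verified Lean document; each statement's English description precedes it below -/
import Mathlib

section
/- Let A_i, B_i, X_i (i = 1, …, n, n ≥ 1) be bounded linear operators on H, and let f, g : [0,∞) → [0,∞) be continuous functions with f(t)g(t) = t for all t ≥ 0. Then for every ν with 0 < ν < 1 and every real number r ≥ 2·max{ν, 1−ν}, ber(Σ_{i=1}^n A_i* X_i B_i)^r ≤ √2 · n^{r−1} · ber(Σ_{i=1}^n (ν·[B_i* f(|X_i|)² B_i]^{r/(2ν)} + i·(1−ν)·[A_i* g(|X_i*|)² A_i]^{r/(2(1−ν))})), where i denotes the imaginary unit. -/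
set_option synthInstance.maxHeartbeats 1000000
set_option maxHeartbeats 1000000

open scoped NNReal
open ContinuousLinearMap

/-- The Berezin number of an operator `T`, relative to the family `k` of
(normalized reproducing kernel) vectors indexed by `Ω`. -/
noncomputable def ber {H : Type*} [NormedAddCommGroup H] [InnerProductSpace ℂ H]
    {Ω : Type*} (k : Ω → H) (T : H →L[ℂ] H) : ℝ :=
  ⨆ lam : Ω, ‖(inner ℂ (T (k lam)) (k lam) : ℂ)‖

/-- The absolute value `|T| = (T*T)^(1/2)` of a bounded operator. -/
noncomputable def opAbs {H : Type*} [NormedAddCommGroup H] [InnerProductSpace ℂ H]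
    [CompleteSpace H] (T : H →L[ℂ] H) : H →L[ℂ] H :=
  CFC.sqrt (adjoint T * T)


set_option linter.unusedSectionVars false
set_option linter.unusedVariables false

section AuxiliaryLemmas

variable {H : Type*} [NormedAddCommGroup H] [InnerProductSpace ℂ H] [CompleteSpace H]

/-- real inner value -/
noncomputable def ipR (S : H →L[ℂ] H) (x : H) : ℝ := Complex.re (inner ℂ (S x) x : ℂ)

lemma ipR_nonneg {S : H →L[ℂ] H} (hS : 0 ≤ S) (x : H) : 0 ≤ ipR S x :=
  ((nonneg_iff_isPositive S).mp hS).re_inner_nonneg_left x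

lemma inner_eq_ipR {S : H →L[ℂ] H} (hS : IsSelfAdjoint S) (x : H) :
    (inner ℂ (S x) x : ℂ) = (ipR S x : ℂ) := by
  have hsym := (isSelfAdjoint_iff_isSymmetric (A := S)).mp hS
  have h2 : (inner ℂ (S x) x : ℂ) = inner ℂ x (S x) := hsym x x
  have h1 : (inner ℂ (S x) x : ℂ) = (starRingEnd ℂ) (inner ℂ (S x) x : ℂ) :=
    h2.trans (inner_conj_symm x (S x)).symm
  have := Complex.conj_eq_iff_re.mp h1.symm
  rw [← this]; rfl

lemma ipR_mono {S T : H →L[ℂ] H} (h : S ≤ T) (x : H) : ipR S x ≤ ipR T x := by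
  have h2 := ((nonneg_iff_isPositive (T - S)).mp (sub_nonneg.mpr h)).re_inner_nonneg_left x
  have : ipR (T - S) x = ipR T x - ipR S x := by
    simp [ipR, ContinuousLinearMap.sub_apply, inner_sub_left]
  change (0:ℝ) ≤ ipR (T - S) x at h2
  linarith

lemma ipR_add (S T : H →L[ℂ] H) (x : H) : ipR (S + T) x = ipR S x + ipR T x := by
  simp [ipR, ContinuousLinearMap.add_apply, inner_add_left]

lemma ipR_one {x : H} (hx : ‖x‖ = 1) : ipR 1 x = 1 := by
  simp [ipR, inner_self_eq_norm_sq_to_K (𝕜 := ℂ), hx]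

lemma ipR_smul_real (c : ℝ) (S : H →L[ℂ] H) (x : H) :
    ipR ((c:ℂ) • S) x = c * ipR S x := by
  simp only [ipR, ContinuousLinearMap.smul_apply, inner_smul_left, Complex.conj_ofReal,
    Complex.mul_re, Complex.ofReal_re, Complex.ofReal_im]
  ring

lemma ipR_conj (C : H →L[ℂ] H) (B : H →L[ℂ] H) (x : H) :
    ipR (star B * C * B) x = ipR C (B x) := by
  simp only [ipR, ContinuousLinearMap.mul_apply, star_eq_adjoint]
  rw [adjoint_inner_left]

lemma ipR_sq {D : H →L[ℂ] H} (hD : IsSelfAdjoint D) (x : H) :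
    ipR (D * D) x = ‖D x‖ ^ 2 := by
  simp only [ipR, ContinuousLinearMap.mul_apply]
  have : (inner ℂ (D (D x)) x : ℂ) = inner ℂ (D x) (adjoint D x) := by
    rw [ContinuousLinearMap.adjoint_inner_right]
  rw [this, hD.adjoint_eq]
  rw [inner_self_eq_norm_sq_to_K (𝕜 := ℂ)]
  simp [← Complex.ofReal_pow]

lemma pow_intertwine (X : H →L[ℂ] H) (n : ℕ) :
    X * (star X * X) ^ n = (X * star X) ^ n * X := by
  induction n with
  | zero => simp
  | succ m ih =>
    rw [pow_succ, ← mul_assoc, ih, pow_succ, mul_assoc, ← mul_assoc X (star X) X,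
      ← mul_assoc, ← mul_assoc]

lemma aeval_intertwine (X : H →L[ℂ] H) (q : Polynomial ℝ) :
    X * (Polynomial.aeval (star X * X) q) = (Polynomial.aeval (X * star X) q) * X := by
  induction q using Polynomial.induction_on with
  | C r => simp [Algebra.commutes, mul_assoc, Algebra.algebraMap_eq_smul_one]
  | add q₁ q₂ h₁ h₂ => simp [mul_add, add_mul, h₁, h₂]
  | monomial n r _ =>
    simp only [map_mul, Polynomial.aeval_C, map_pow, Polynomial.aeval_X]
    calc X * (algebraMap ℝ _ r * (star X * X) ^ (n+1))
        = algebraMap ℝ _ r * (X * (star X * X) ^ (n+1)) := by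
          simp [Algebra.algebraMap_eq_smul_one, mul_smul_comm, smul_mul_assoc]
      _ = algebraMap ℝ _ r * ((X * star X) ^ (n+1) * X) := by rw [pow_intertwine]
      _ = algebraMap ℝ _ r * (X * star X) ^ (n+1) * X := by rw [mul_assoc]

lemma cfc_intertwine (X : H →L[ℂ] H) (h : ℝ → ℝ) (hh : Continuous h) :
    X * cfc h (star X * X) = cfc h (X * star X) * X := by
  set R := star X * X with hR
  set R' := X * star X with hR'
  have hRsa : IsSelfAdjoint R := IsSelfAdjoint.star_mul_self X
  have hR'sa : IsSelfAdjoint R' := IsSelfAdjoint.mul_star_self X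
  set M : ℝ := ‖R‖ * ‖(1 : H →L[ℂ] H)‖ + ‖R'‖ * ‖(1 : H →L[ℂ] H)‖ with hM
  have hMspec : spectrum ℝ R ⊆ Set.Icc (-M) M := by
    intro t ht
    have h1 := spectrum.norm_le_norm_mul_of_mem ht
    have h2 : (0:ℝ) ≤ ‖R'‖ * ‖(1 : H →L[ℂ] H)‖ := by positivity
    rw [Real.norm_eq_abs] at h1
    constructor <;> [nlinarith [abs_nonneg t, neg_abs_le t, le_abs_self t];
      nlinarith [le_abs_self t]]
  have hMspec' : spectrum ℝ R' ⊆ Set.Icc (-M) M := by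
    intro t ht
    have h1 := spectrum.norm_le_norm_mul_of_mem ht
    have h2 : (0:ℝ) ≤ ‖R‖ * ‖(1 : H →L[ℂ] H)‖ := by positivity
    rw [Real.norm_eq_abs] at h1
    constructor <;> [nlinarith [abs_nonneg t, neg_abs_le t, le_abs_self t];
      nlinarith [le_abs_self t]]
  have key : ∀ ε : ℝ, 0 < ε → ‖X * cfc h R - cfc h R' * X‖ ≤ 2 * ‖X‖ * ε := by
    intro ε hε
    obtain ⟨p, hp⟩ := exists_polynomial_near_of_continuousOn (-M) M h
      hh.continuousOn ε hε
    have hpe : X * cfc p.eval R = cfc p.eval R' * X := by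
      rw [cfc_polynomial p R hRsa, cfc_polynomial p R' hR'sa]
      exact aeval_intertwine X p
    have hb1 : ‖cfc h R - cfc p.eval R‖ ≤ ε := by
      rw [← cfc_sub h p.eval R]
      refine norm_cfc_le hε.le fun t ht => ?_
      have := hp t (hMspec ht)
      rw [Real.norm_eq_abs, abs_sub_comm]
      exact this.le
    have hb2 : ‖cfc h R' - cfc p.eval R'‖ ≤ ε := by
      rw [← cfc_sub h p.eval R']
      refine norm_cfc_le hε.le fun t ht => ?_
      have := hp t (hMspec' ht)
      rw [Real.norm_eq_abs, abs_sub_comm]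
      exact this.le
    have hb2' : ‖cfc p.eval R' - cfc h R'‖ ≤ ε := by rwa [norm_sub_rev] at hb2
    calc ‖X * cfc h R - cfc h R' * X‖
        = ‖X * (cfc h R - cfc p.eval R) + (X * cfc p.eval R - cfc p.eval R' * X)
            + (cfc p.eval R' - cfc h R') * X‖ := by congr 1; noncomm_ring
      _ ≤ ‖X * (cfc h R - cfc p.eval R)‖ + ‖X * cfc p.eval R - cfc p.eval R' * X‖
            + ‖(cfc p.eval R' - cfc h R') * X‖ := norm_add₃_le
      _ ≤ ‖X‖ * ε + 0 + ε * ‖X‖ := by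
          gcongr ?_ + ?_ + ?_
          · exact (norm_mul_le _ _).trans (mul_le_mul_of_nonneg_left hb1 (norm_nonneg X))
          · rw [hpe, sub_self, norm_zero]
          · exact (norm_mul_le _ _).trans (mul_le_mul_of_nonneg_right hb2' (norm_nonneg X))
      _ = 2 * ‖X‖ * ε := by ring
  have : ‖X * cfc h R - cfc h R' * X‖ ≤ 0 := by
    refine le_of_forall_pos_le_add fun ε hε => ?_
    have h2 := key (ε / (2 * ‖X‖ + 1)) (by positivity)
    have hX : (0:ℝ) ≤ ‖X‖ := norm_nonneg X
    calc ‖X * cfc h R - cfc h R' * X‖ ≤ 2 * ‖X‖ * (ε / (2 * ‖X‖ + 1)) := h2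
      _ ≤ ε := by
          rw [div_eq_inv_mul, ← mul_assoc]
          have : 2 * ‖X‖ * (2 * ‖X‖ + 1)⁻¹ ≤ 1 := by
            rw [mul_inv_le_iff₀ (by positivity)]
            linarith
          nlinarith
      _ ≤ 0 + ε := by linarith
  exact sub_eq_zero.mp (norm_le_zero_iff.mp this)

lemma tangent_rpow {c t s : ℝ} (hc : 0 ≤ c) (ht : 0 ≤ t) (hs : 1 ≤ s) :
    c ^ s + s * c ^ (s - 1) * (t - c) ≤ t ^ s := by
  rcases eq_or_lt_of_le hc with hc0 | hcpos
  · -- c = 0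
    rcases eq_or_lt_of_le hs with hs1 | hs1
    · subst hc0; rw [← hs1]
      simp [Real.rpow_one, Real.zero_rpow (by norm_num : (1:ℝ) ≠ 0)]
    · subst hc0
      rw [Real.zero_rpow (by linarith : s ≠ 0), Real.zero_rpow (by linarith : s - 1 ≠ 0)]
      simpa using Real.rpow_nonneg ht s
  · -- c > 0
    have hu : -1 ≤ t / c - 1 := by
      have : 0 ≤ t / c := div_nonneg ht hcpos.le
      linarith
    have hb := one_add_mul_self_le_rpow_one_add hu hs
    have h1u : 1 + (t / c - 1) = t / c := by ring
    rw [h1u] at hb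
    have hcs : 0 < c ^ s := Real.rpow_pos_of_pos hcpos s
    have hdiv : (t / c) ^ s = t ^ s / c ^ s := Real.div_rpow ht hcpos.le s
    have hsub : c ^ (s - 1) = c ^ s / c := by
      rw [Real.rpow_sub hcpos, Real.rpow_one]
    have hmul := mul_le_mul_of_nonneg_left hb hcs.le
    rw [hdiv, mul_div_cancel₀ _ (ne_of_gt hcs)] at hmul
    calc c ^ s + s * c ^ (s - 1) * (t - c)
        = c ^ s * (1 + s * (t / c - 1)) := by
          rw [hsub]; field_simp
      _ ≤ t ^ s := hmul

lemma ipR_smul_realR (c : ℝ) (S : H →L[ℂ] H) (x : H) :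
    ipR (c • S) x = c * ipR S x := by
  simp only [ipR, ContinuousLinearMap.smul_apply]
  rw [RCLike.real_smul_eq_coe_smul (K := ℂ) c (S x), inner_smul_left]
  simp

lemma mccarthy {P : H →L[ℂ] H} (hP : 0 ≤ P) {x : H} (hx : ‖x‖ = 1) {s : ℝ} (hs : 1 ≤ s) :
    ipR P x ^ s ≤ ipR (CFC.rpow P s) x := by
  have hPsa : IsSelfAdjoint P := IsSelfAdjoint.of_nonneg hP
  set c : ℝ := ipR P x with hcdef
  have hc : 0 ≤ c := ipR_nonneg hP x
  set β : ℝ := s * c ^ (s - 1) with hβ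
  set α : ℝ := c ^ s - β * c with hα
  have hfun_cont : Continuous (fun t : ℝ => (((t.toNNReal) ^ s : ℝ≥0) : ℝ)) := by
    refine NNReal.continuous_coe.comp ?_
    exact (NNReal.continuous_rpow_const (by linarith)).comp continuous_real_toNNReal
  have hrpow : CFC.rpow P s = cfc (fun t : ℝ => (((t.toNNReal) ^ s : ℝ≥0) : ℝ)) P := by
    rw [show CFC.rpow P s = cfc (fun t : ℝ≥0 => t ^ s) P from rfl, cfc_nnreal_eq_real _ P hP]
  have haff : cfc (fun t : ℝ => α + β * t) P = α • (1 : H →L[ℂ] H) + β • P := by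
    rw [cfc_add P (fun _ => α) (fun t => β * t) (by fun_prop) (by fun_prop),
      cfc_const α P hPsa, cfc_const_mul_id β P hPsa, Algebra.algebraMap_eq_smul_one]
  have hmono : cfc (fun t : ℝ => α + β * t) P ≤ CFC.rpow P s := by
    rw [hrpow]
    refine cfc_mono (fun t ht => ?_) (by fun_prop) hfun_cont.continuousOn
    have ht0 : 0 ≤ t := spectrum_nonneg_of_nonneg hP ht
    have := tangent_rpow hc ht0 hs
    rw [NNReal.coe_rpow, Real.coe_toNNReal t ht0]
    calc α + β * t = c ^ s + s * c ^ (s - 1) * (t - c) := by rw [hα, hβ]; ring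
      _ ≤ t ^ s := this
  have hval : ipR (cfc (fun t : ℝ => α + β * t) P) x = c ^ s := by
    rw [haff, ipR_add, ipR_smul_realR, ipR_smul_realR, ipR_one hx, hα]
    ring
  calc c ^ s = ipR (cfc (fun t : ℝ => α + β * t) P) x := hval.symm
    _ ≤ ipR (CFC.rpow P s) x := ipR_mono hmono x

lemma ipR_star_mul_self (Y : H →L[ℂ] H) (w : H) : ipR (star Y * Y) w = ‖Y w‖ ^ 2 := by
  simp only [ipR, ContinuousLinearMap.mul_apply, star_eq_adjoint]
  rw [adjoint_inner_left, inner_self_eq_norm_sq_to_K (𝕜 := ℂ)]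
  simp [← Complex.ofReal_pow]

lemma ipR_id (v : H) : ipR (1 : H →L[ℂ] H) v = ‖v‖ ^ 2 := by
  simp only [ipR, ContinuousLinearMap.one_apply]
  rw [inner_self_eq_norm_sq_to_K (𝕜 := ℂ)]
  simp [← Complex.ofReal_pow]

lemma inner_cfc_move (h₁ h₂ : ℝ → ℝ) (a : H →L[ℂ] H) (ha : IsSelfAdjoint a)
    (hc₁ : Continuous h₁) (hc₂ : Continuous h₂) (v : H) :
    ipR (cfc h₂ a) (cfc h₁ a v) = ipR (cfc (fun t => h₁ t * (h₂ t * h₁ t)) a) v := by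
  have hT : IsSelfAdjoint (cfc h₁ a) := cfc_predicate h₁ a
  have hprod : cfc (fun t => h₁ t * (h₂ t * h₁ t)) a
      = cfc h₁ a * (cfc h₂ a * cfc h₁ a) := by
    rw [cfc_mul _ _ a hc₁.continuousOn (by exact (hc₂.mul hc₁).continuousOn),
      cfc_mul _ _ a hc₂.continuousOn hc₁.continuousOn]
  rw [hprod]
  simp only [ipR, ContinuousLinearMap.mul_apply]
  congr 1
  have h := ContinuousLinearMap.adjoint_inner_left (cfc h₁ a) v (cfc h₂ a (cfc h₁ a v))
  rw [hT.adjoint_eq] at h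
  exact h.symm

lemma sq_le_helper {a b : ℝ} (ha : 0 ≤ a) (hb : 0 ≤ b) (h : a ^ 2 ≤ b ^ 2) : a ≤ b := by
  nlinarith

lemma mixed_schwarz (X : H →L[ℂ] H) (f g : ℝ≥0 → ℝ≥0) (hf : Continuous f) (hg : Continuous g)
    (hfg : ∀ t : ℝ≥0, f t * g t = t) (u v : H) :
    ‖(inner ℂ (X u) v : ℂ)‖
      ≤ ‖cfc f (CFC.sqrt (star X * X)) u‖ * ‖cfc g (CFC.sqrt (X * star X)) v‖ := by
  set R : H →L[ℂ] H := star X * X with hRdef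
  set R' : H →L[ℂ] H := X * star X with hR'def
  have hRpos : (0 : H →L[ℂ] H) ≤ R := star_mul_self_nonneg X
  have hR'pos : (0 : H →L[ℂ] H) ≤ R' := mul_star_self_nonneg X
  have hRsa : IsSelfAdjoint R := IsSelfAdjoint.of_nonneg hRpos
  have hR'sa : IsSelfAdjoint R' := IsSelfAdjoint.of_nonneg hR'pos
  set Φ : ℝ → ℝ := fun t => (f (Real.sqrt t).toNNReal : ℝ) with hΦdef
  set Ψ : ℝ → ℝ := fun t => (g (Real.sqrt t).toNNReal : ℝ) with hΨdef
  have hΦc : Continuous Φ := by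
    exact NNReal.continuous_coe.comp (hf.comp (continuous_real_toNNReal.comp
      Real.continuous_sqrt))
  have hΨc : Continuous Ψ := by
    exact NNReal.continuous_coe.comp (hg.comp (continuous_real_toNNReal.comp
      Real.continuous_sqrt))
  have hΦΨ : ∀ t : ℝ, Φ t * Ψ t = Real.sqrt t := by
    intro t
    have := hfg (Real.sqrt t).toNNReal
    have h2 := congrArg NNReal.toReal this
    push_cast at h2
    simpa [hΦdef, hΨdef, Real.coe_toNNReal _ (Real.sqrt_nonneg t)] using h2
  have hΨnn : ∀ t : ℝ, 0 ≤ Ψ t := fun t => NNReal.coe_nonneg _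
  -- bridge: cfc over ℝ≥0 of sqrt equals cfc over ℝ
  have hsqrt_bridge : ∀ (S : H →L[ℂ] H), (0 : H →L[ℂ] H) ≤ S →
      CFC.sqrt S = cfc Real.sqrt S := by
    intro S hS
    rw [CFC.sqrt_eq_cfc (a := S), cfc_nnreal_eq_real _ S hS]
    exact cfc_congr fun t _ => by rw [Real.sqrt]
  have hbridge : ∀ (φ : ℝ≥0 → ℝ≥0), Continuous φ → ∀ (S : H →L[ℂ] H), (0:H →L[ℂ] H) ≤ S →
      cfc φ (CFC.sqrt S) = cfc (fun t : ℝ => (φ (Real.sqrt t).toNNReal : ℝ)) S := by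
    intro φ hφ S hS
    have h1 : cfc φ (CFC.sqrt S) = cfc (fun t : ℝ => (φ t.toNNReal : ℝ)) (CFC.sqrt S) :=
      cfc_nnreal_eq_real _ _ (CFC.sqrt_nonneg S)
    rw [h1, hsqrt_bridge S hS, ← cfc_comp' (fun t : ℝ => (φ t.toNNReal : ℝ)) Real.sqrt S
      (by exact (NNReal.continuous_coe.comp (hφ.comp continuous_real_toNNReal)).continuousOn)
      Real.continuous_sqrt.continuousOn (IsSelfAdjoint.of_nonneg hS)]
  have hFb : cfc f (CFC.sqrt R) = cfc Φ R := hbridge f hf R hRpos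
  have hGb : cfc g (CFC.sqrt R') = cfc Ψ R' := hbridge g hg R' hR'pos
  rw [hFb, hGb]
  set F : H →L[ℂ] H := cfc Φ R with hF
  set G : H →L[ℂ] H := cfc Ψ R' with hG
  -- epsilon argument
  have key : ∀ ε : ℝ, 0 < ε →
      ‖(inner ℂ (X u) v : ℂ)‖ ≤ ‖F u‖ * ‖G v‖ + ε * (‖u‖ * ‖v‖) := by
    intro ε hε
    set efun : ℝ → ℝ := fun t => (Real.sqrt t + ε)⁻¹ with hedef
    have hepos : ∀ t : ℝ, 0 < Real.sqrt t + ε := fun t => by positivity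
    have hec : Continuous efun := by
      exact (Real.continuous_sqrt.add continuous_const).inv₀ fun t => (hepos t).ne'
    set hfun : ℝ → ℝ := fun t => efun t * Ψ t with hhdef
    have hhc : Continuous hfun := hec.mul hΨc
    -- the operator identity
    have key_id : X = cfc hfun R' * X * F + ε • (cfc efun R' * X) := by
      have e1 : X * cfc hfun R = cfc hfun R' * X := cfc_intertwine X hfun hhc
      have e2 : X * cfc efun R = cfc efun R' * X := cfc_intertwine X efun hec
      have e3 : cfc (fun t => hfun t * Φ t + ε * efun t) R = (1 : H →L[ℂ] H) := by
        have : ∀ t : ℝ, hfun t * Φ t + ε * efun t = 1 := by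
          intro t
          have h1 : Ψ t * Φ t = Real.sqrt t := by rw [mul_comm]; exact hΦΨ t
          have h2 : efun t * (Real.sqrt t + ε) = 1 := inv_mul_cancel₀ (hepos t).ne'
          calc hfun t * Φ t + ε * efun t = efun t * (Ψ t * Φ t) + ε * efun t := by
                rw [hhdef]; ring
            _ = efun t * (Real.sqrt t + ε) := by rw [h1]; ring
            _ = 1 := h2
        calc cfc (fun t => hfun t * Φ t + ε * efun t) R = cfc (fun _ : ℝ => (1:ℝ)) R := by
              exact cfc_congr fun t _ => this t
          _ = 1 := cfc_const_one ℝ R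
      have e4 : cfc (fun t => hfun t * Φ t + ε * efun t) R
          = cfc hfun R * F + ε • cfc efun R := by
        rw [cfc_add R (fun t => hfun t * Φ t) (fun t => ε * efun t)
            (by exact (hhc.mul hΦc).continuousOn) (by exact (continuous_const.mul hec).continuousOn),
          cfc_mul _ _ R hhc.continuousOn hΦc.continuousOn,
          cfc_const_mul ε efun R hec.continuousOn]
      calc X = X * (1 : H →L[ℂ] H) := (mul_one X).symm
        _ = X * (cfc hfun R * F + ε • cfc efun R) := by rw [← e4, e3]
        _ = X * cfc hfun R * F + ε • (X * cfc efun R) := by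
            rw [mul_add, mul_smul_comm, mul_assoc]
        _ = cfc hfun R' * X * F + ε • (cfc efun R' * X) := by rw [e1, e2]
    -- bound 1 : ‖(star X * cfc hfun R') v‖ ≤ ‖G v‖
    have bound1 : ‖(star X * cfc hfun R') v‖ ≤ ‖G v‖ := by
      refine sq_le_helper (norm_nonneg _) (norm_nonneg _) ?_
      have h1 : ‖(star X * cfc hfun R') v‖ ^ 2 = ipR R' (cfc hfun R' v) := by
        rw [ContinuousLinearMap.mul_apply]
        rw [← ipR_star_mul_self (star X) (cfc hfun R' v)]
        rw [star_star]
      have h2 : ipR R' (cfc hfun R' v) = ipR (cfc (fun t => hfun t * (t * hfun t)) R') v := by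
        have h2' := inner_cfc_move hfun id R' hR'sa hhc continuous_id v
        rwa [cfc_id ℝ R' hR'sa] at h2'
      have h3 : cfc (fun t => Ψ t * Ψ t) R' = G * G :=
        cfc_mul _ _ R' hΨc.continuousOn hΨc.continuousOn
      have h4 : ipR (G * G) v = ‖G v‖ ^ 2 := ipR_sq (cfc_predicate Ψ R') v
      have h5 : ipR (cfc (fun t => hfun t * (t * hfun t)) R') v
          ≤ ipR (cfc (fun t => Ψ t * Ψ t) R') v := by
        refine ipR_mono (cfc_mono (fun t ht => ?_)
          (by exact (hhc.mul (continuous_id.mul hhc)).continuousOn)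
          (by exact (hΨc.mul hΨc).continuousOn)) v
        have ht0 : 0 ≤ t := spectrum_nonneg_of_nonneg hR'pos ht
        have hq : Real.sqrt t ^ 2 = t := Real.sq_sqrt ht0
        have hq0 : 0 ≤ Real.sqrt t := Real.sqrt_nonneg t
        have he1 : efun t * (Real.sqrt t + ε) = 1 := inv_mul_cancel₀ (hepos t).ne'
        have he0 : 0 ≤ efun t := le_of_lt (by positivity)
        have heq : efun t * Real.sqrt t ≤ 1 := by nlinarith
        have hΨ0 := hΨnn t
        have hsq : efun t ^ 2 * t = (efun t * Real.sqrt t) ^ 2 := by rw [mul_pow, hq]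
        have h01 : (efun t * Real.sqrt t) ^ 2 ≤ 1 := by
          nlinarith [heq, mul_nonneg he0 hq0]
        calc hfun t * (t * hfun t) = Ψ t * Ψ t * (efun t ^ 2 * t) := by
              simp only [hhdef]; ring
          _ = Ψ t * Ψ t * (efun t * Real.sqrt t) ^ 2 := by rw [hsq]
          _ ≤ (Ψ t * Ψ t) * 1 := by
              have : (0:ℝ) ≤ Ψ t * Ψ t := mul_nonneg hΨ0 hΨ0
              exact mul_le_mul_of_nonneg_left h01 this
          _ = Ψ t * Ψ t := mul_one _
      rw [h1, h2, ← h4, ← h3]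
      exact h5
    -- bound 2 : ‖(star X * cfc efun R') v‖ ≤ ‖v‖
    have bound2 : ‖(star X * cfc efun R') v‖ ≤ ‖v‖ := by
      refine sq_le_helper (norm_nonneg _) (norm_nonneg _) ?_
      have h1 : ‖(star X * cfc efun R') v‖ ^ 2 = ipR R' (cfc efun R' v) := by
        rw [ContinuousLinearMap.mul_apply, ← ipR_star_mul_self (star X) (cfc efun R' v),
          star_star]
      have h2 : ipR R' (cfc efun R' v) = ipR (cfc (fun t => efun t * (t * efun t)) R') v := by
        have h2' := inner_cfc_move efun id R' hR'sa hec continuous_id v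
        rwa [cfc_id ℝ R' hR'sa] at h2'
      have h5 : ipR (cfc (fun t => efun t * (t * efun t)) R') v
          ≤ ipR (cfc (fun _ : ℝ => (1:ℝ)) R') v := by
        refine ipR_mono (cfc_mono (fun t ht => ?_)
          (by exact (hec.mul (continuous_id.mul hec)).continuousOn)
          continuousOn_const) v
        have ht0 : 0 ≤ t := spectrum_nonneg_of_nonneg hR'pos ht
        have hq : Real.sqrt t ^ 2 = t := Real.sq_sqrt ht0
        have hq0 : 0 ≤ Real.sqrt t := Real.sqrt_nonneg t
        have he1 : efun t * (Real.sqrt t + ε) = 1 := inv_mul_cancel₀ (hepos t).ne'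
        have he0 : 0 ≤ efun t := le_of_lt (by positivity)
        have heq : efun t * Real.sqrt t ≤ 1 := by nlinarith
        have hsq : efun t ^ 2 * t = (efun t * Real.sqrt t) ^ 2 := by rw [mul_pow, hq]
        calc efun t * (t * efun t) = efun t ^ 2 * t := by ring
          _ = (efun t * Real.sqrt t) ^ 2 := hsq
          _ ≤ 1 := by nlinarith [heq, mul_nonneg he0 hq0]
      rw [h1, h2]
      calc ipR (cfc (fun t => efun t * (t * efun t)) R') v
          ≤ ipR (cfc (fun _ : ℝ => (1:ℝ)) R') v := h5
        _ = ‖v‖ ^ 2 := by rw [cfc_const_one ℝ R', ipR_id]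
    -- put together
    have hsplit : (inner ℂ (X u) v : ℂ)
        = inner ℂ (F u) ((star X * cfc hfun R') v) + (ε : ℂ) * inner ℂ u ((star X * cfc efun R') v) := by
      conv_lhs => rw [key_id]
      rw [ContinuousLinearMap.add_apply, inner_add_left]
      congr 1
      · -- first
        rw [ContinuousLinearMap.mul_apply]
        have := ContinuousLinearMap.adjoint_inner_right (cfc hfun R' * X) (F u) v
        rw [← ContinuousLinearMap.star_eq_adjoint] at this
        rw [← this]
        congr 1
        rw [star_mul, (cfc_predicate hfun R' : IsSelfAdjoint _).star_eq]
      · rw [ContinuousLinearMap.smul_apply]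
        rw [RCLike.real_smul_eq_coe_smul (K := ℂ), inner_smul_left, RCLike.conj_ofReal]
        congr 1
        have := ContinuousLinearMap.adjoint_inner_right (cfc efun R' * X) u v
        rw [← ContinuousLinearMap.star_eq_adjoint] at this
        rw [← this]
        congr 1
        rw [star_mul, (cfc_predicate efun R' : IsSelfAdjoint _).star_eq]
    calc ‖(inner ℂ (X u) v : ℂ)‖
        ≤ ‖(inner ℂ (F u) ((star X * cfc hfun R') v) : ℂ)‖
            + ‖(ε : ℂ) * (inner ℂ u ((star X * cfc efun R') v) : ℂ)‖ := by
          rw [hsplit]; exact norm_add_le _ _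
      _ ≤ ‖F u‖ * ‖G v‖ + ε * (‖u‖ * ‖v‖) := by
          gcongr ?_ + ?_
          · calc ‖(inner ℂ (F u) ((star X * cfc hfun R') v) : ℂ)‖
                ≤ ‖F u‖ * ‖(star X * cfc hfun R') v‖ := norm_inner_le_norm _ _
              _ ≤ ‖F u‖ * ‖G v‖ := mul_le_mul_of_nonneg_left bound1 (norm_nonneg _)
          · rw [norm_mul, Complex.norm_real, Real.norm_eq_abs, abs_of_pos hε]
            gcongr
            calc ‖(inner ℂ u ((star X * cfc efun R') v) : ℂ)‖
                ≤ ‖u‖ * ‖(star X * cfc efun R') v‖ := norm_inner_le_norm _ _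
              _ ≤ ‖u‖ * ‖v‖ := mul_le_mul_of_nonneg_left bound2 (norm_nonneg _)
  -- take epsilon to zero
  refine le_of_forall_pos_le_add fun δ hδ => ?_
  have h := key (δ / (‖u‖ * ‖v‖ + 1)) (by positivity)
  have huv : (0:ℝ) ≤ ‖u‖ * ‖v‖ := by positivity
  calc ‖(inner ℂ (X u) v : ℂ)‖ ≤ ‖F u‖ * ‖G v‖ + δ / (‖u‖ * ‖v‖ + 1) * (‖u‖ * ‖v‖) := h
    _ ≤ ‖F u‖ * ‖G v‖ + δ := by
        have : δ / (‖u‖ * ‖v‖ + 1) * (‖u‖ * ‖v‖) ≤ δ := by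
          rw [div_mul_eq_mul_div, div_le_iff₀ (by positivity)]
          nlinarith
        linarith

end AuxiliaryLemmas

theorem berezin_power_inequality_triple_products
    {H : Type*} [NormedAddCommGroup H] [InnerProductSpace ℂ H] [CompleteSpace H]
    {Ω : Type*} [Nonempty Ω] (k : Ω → H) (hk : ∀ lam, ‖k lam‖ = 1)
    (n : ℕ) (hn : 1 ≤ n) (A B X : Fin n → (H →L[ℂ] H))
    (f g : ℝ≥0 → ℝ≥0) (hf : Continuous f) (hg : Continuous g)
    (hfg : ∀ t : ℝ≥0, f t * g t = t)
    (ν : ℝ) (hν : 0 < ν) (hν' : ν < 1) (r : ℝ) (hr : 2 * max ν (1 - ν) ≤ r) :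
    ber k (∑ i, adjoint (A i) * X i * B i) ^ r ≤
      Real.sqrt 2 * (n : ℝ) ^ (r - 1)
        * ber k (∑ i,
            ((ν : ℂ) • CFC.rpow (adjoint (B i) * cfc f (opAbs (X i)) ^ 2 * B i)
                (r / (2 * ν))
              + (Complex.I * ((1 - ν : ℝ) : ℂ)) •
                  CFC.rpow (adjoint (A i) * cfc g (opAbs (adjoint (X i))) ^ 2 * A i)
                    (r / (2 * (1 - ν))))) := by
  have hν1 : 0 < 1 - ν := by linarith
  have hr1 : 1 ≤ r := by
    rcases le_total ν (1 - ν) with h | h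
    · have : max ν (1 - ν) = 1 - ν := max_eq_right h
      rw [this] at hr; nlinarith [le_max_right ν (1-ν)]
    · have : max ν (1 - ν) = ν := max_eq_left h
      rw [this] at hr; nlinarith
  have hr0 : 0 < r := by linarith
  set s : ℝ := r / (2 * ν) with hsdef
  set t' : ℝ := r / (2 * (1 - ν)) with ht'def
  have hs1 : 1 ≤ s := by
    rw [hsdef, le_div_iff₀ (by positivity)]
    calc 1 * (2 * ν) = 2 * ν := one_mul _
      _ ≤ 2 * max ν (1 - ν) := by gcongr; exact le_max_left _ _
      _ ≤ r := hr
  have ht1 : 1 ≤ t' := by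
    rw [ht'def, le_div_iff₀ (by positivity)]
    calc 1 * (2 * (1 - ν)) = 2 * (1 - ν) := one_mul _
      _ ≤ 2 * max ν (1 - ν) := by gcongr; exact le_max_right _ _
      _ ≤ r := hr
  -- operators
  set P : Fin n → (H →L[ℂ] H) := fun i => adjoint (B i) * cfc f (opAbs (X i)) ^ 2 * B i with hPdef
  set Q : Fin n → (H →L[ℂ] H) :=
    fun i => adjoint (A i) * cfc g (opAbs (adjoint (X i))) ^ 2 * A i with hQdef
  set T : H →L[ℂ] H := ∑ i, adjoint (A i) * X i * B i with hTdef
  set S : H →L[ℂ] H := ∑ i, ((ν : ℂ) • CFC.rpow (P i) s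
      + (Complex.I * ((1 - ν : ℝ) : ℂ)) • CFC.rpow (Q i) t') with hSdef
  have hDfpos : ∀ i, (0 : H →L[ℂ] H) ≤ cfc f (opAbs (X i)) := fun i => cfc_predicate _ _
  have hDgpos : ∀ i, (0 : H →L[ℂ] H) ≤ cfc g (opAbs (adjoint (X i))) := fun i =>
    cfc_predicate _ _
  have hPpos : ∀ i, (0 : H →L[ℂ] H) ≤ P i := by
    intro i
    have hsa : IsSelfAdjoint (cfc f (opAbs (X i))) := .of_nonneg (hDfpos i)
    have h2 : cfc f (opAbs (X i)) ^ 2 = star (cfc f (opAbs (X i))) * cfc f (opAbs (X i)) := by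
      rw [pow_two, hsa.star_eq]
    show (0 : H →L[ℂ] H) ≤ adjoint (B i) * cfc f (opAbs (X i)) ^ 2 * B i
    rw [h2, ← ContinuousLinearMap.star_eq_adjoint]
    exact star_left_conjugate_nonneg (star_mul_self_nonneg _) _
  have hQpos : ∀ i, (0 : H →L[ℂ] H) ≤ Q i := by
    intro i
    have hsa : IsSelfAdjoint (cfc g (opAbs (adjoint (X i)))) := .of_nonneg (hDgpos i)
    have h2 : cfc g (opAbs (adjoint (X i))) ^ 2
        = star (cfc g (opAbs (adjoint (X i)))) * cfc g (opAbs (adjoint (X i))) := by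
      rw [pow_two, hsa.star_eq]
    show (0 : H →L[ℂ] H) ≤ adjoint (A i) * cfc g (opAbs (adjoint (X i))) ^ 2 * A i
    rw [h2, ← ContinuousLinearMap.star_eq_adjoint]
    exact star_left_conjugate_nonneg (star_mul_self_nonneg _) _
  have hPssa : ∀ i, (0 : H →L[ℂ] H) ≤ CFC.rpow (P i) s := fun i => CFC.rpow_nonneg
  have hQssa : ∀ i, (0 : H →L[ℂ] H) ≤ CFC.rpow (Q i) t' := fun i => CFC.rpow_nonneg
  -- ber S facts
  have hberS_nonneg : 0 ≤ ber k S := by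
    rw [ber]; exact Real.iSup_nonneg fun lam => norm_nonneg _
  have hberS_bound : ∀ lam, ‖(inner ℂ (S (k lam)) (k lam) : ℂ)‖ ≤ ber k S := by
    intro lam
    rw [ber]
    refine le_ciSup (f := fun lam : Ω => ‖(inner ℂ (S (k lam)) (k lam) : ℂ)‖) ⟨‖S‖, ?_⟩ lam
    rintro y ⟨lam', rfl⟩
    calc ‖(inner ℂ (S (k lam')) (k lam') : ℂ)‖ ≤ ‖S (k lam')‖ * ‖k lam'‖ :=
          norm_inner_le_norm _ _
      _ ≤ ‖S‖ * ‖k lam'‖ * ‖k lam'‖ := by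
          gcongr
          exact S.le_opNorm _
      _ = ‖S‖ := by rw [hk lam', mul_one, mul_one]
  set M : ℝ := Real.sqrt 2 * (n : ℝ) ^ (r - 1) * ber k S with hMdef
  have hM0 : 0 ≤ M := by
    refine mul_nonneg (mul_nonneg (Real.sqrt_nonneg 2) ?_) hberS_nonneg
    positivity
  -- pointwise estimate
  have pointwise : ∀ lam : Ω, ‖(inner ℂ (T (k lam)) (k lam) : ℂ)‖ ^ r ≤ M := by
    intro lam
    set x : H := k lam with hxdef
    have hx : ‖x‖ = 1 := hk lam
    set c : Fin n → ℝ := fun i => ‖(inner ℂ ((adjoint (A i) * X i * B i) x) x : ℂ)‖ with hcdef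
    have hc0 : ∀ i, 0 ≤ c i := fun i => norm_nonneg _
    -- step A
    have stepA : ‖(inner ℂ (T x) x : ℂ)‖ ≤ ∑ i, c i := by
      rw [hTdef]
      calc ‖(inner ℂ ((∑ i, adjoint (A i) * X i * B i) x) x : ℂ)‖
          = ‖∑ i, (inner ℂ ((adjoint (A i) * X i * B i) x) x : ℂ)‖ := by
            rw [ContinuousLinearMap.sum_apply, sum_inner]
        _ ≤ ∑ i, c i := norm_sum_le _ _
    -- step B/C
    have stepC : ∀ i, c i ^ r ≤ ν * ipR (CFC.rpow (P i) s) x + (1 - ν) * ipR (CFC.rpow (Q i) t') x := by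
      intro i
      set Df := cfc f (opAbs (X i)) with hDf
      set Dg := cfc g (opAbs (adjoint (X i))) with hDg
      have hDfsa : IsSelfAdjoint Df := .of_nonneg (hDfpos i)
      have hDgsa : IsSelfAdjoint Dg := .of_nonneg (hDgpos i)
      set u : ℝ := ‖Df (B i x)‖ with hu
      set w : ℝ := ‖Dg (A i x)‖ with hw
      have hu0 : 0 ≤ u := norm_nonneg _
      have hw0 : 0 ≤ w := norm_nonneg _
      -- mixed Schwarz
      have hms : c i ≤ u * w := by
        have h1 : (inner ℂ ((adjoint (A i) * X i * B i) x) x : ℂ)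
            = inner ℂ (X i (B i x)) (A i x) := by
          rw [ContinuousLinearMap.mul_apply, ContinuousLinearMap.mul_apply,
            ContinuousLinearMap.adjoint_inner_left]
        have h2 := mixed_schwarz (X i) f g hf hg hfg (B i x) (A i x)
        rw [hcdef]
        simp only [h1]
        have e1 : CFC.sqrt (star (X i) * X i) = opAbs (X i) := by
          rw [opAbs, ContinuousLinearMap.star_eq_adjoint]
        have e2 : CFC.sqrt (X i * star (X i)) = opAbs (adjoint (X i)) := by
          rw [opAbs, adjoint_adjoint, ContinuousLinearMap.star_eq_adjoint]
        rw [e1, e2] at h2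
        exact h2
      -- inner products of P, Q
      have hPa : ipR (P i) x = u ^ 2 := by
        have hPi : P i = star (B i) * (Df * Df) * B i := by
          rw [hPdef]
          show adjoint (B i) * Df ^ 2 * B i = star (B i) * (Df * Df) * B i
          rw [pow_two, ContinuousLinearMap.star_eq_adjoint]
        rw [hPi, ipR_conj, ipR_sq hDfsa]
      have hQa : ipR (Q i) x = w ^ 2 := by
        have hQi : Q i = star (A i) * (Dg * Dg) * A i := by
          rw [hQdef]
          show adjoint (A i) * Dg ^ 2 * A i = star (A i) * (Dg * Dg) * A i
          rw [pow_two, ContinuousLinearMap.star_eq_adjoint]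
        rw [hQi, ipR_conj, ipR_sq hDgsa]
      -- chain
      have hchain : c i ^ r ≤ ν * (u ^ 2) ^ s + (1 - ν) * (w ^ 2) ^ t' := by
        have h3 : c i ^ r ≤ (u * w) ^ r :=
          Real.rpow_le_rpow (hc0 i) hms hr0.le
        have h4 : (u * w) ^ r = u ^ r * w ^ r := Real.mul_rpow hu0 hw0
        have h5 : u ^ r = ((u ^ 2 : ℝ) ^ s) ^ ν := by
          rw [← Real.rpow_natCast u 2, ← Real.rpow_mul hu0, ← Real.rpow_mul (by positivity)]
          congr 1
          rw [hsdef]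
          field_simp
          ring
        have h6 : w ^ r = ((w ^ 2 : ℝ) ^ t') ^ (1 - ν) := by
          rw [← Real.rpow_natCast w 2, ← Real.rpow_mul hw0, ← Real.rpow_mul (by positivity)]
          congr 1
          rw [ht'def]
          field_simp
          ring
        have h7 := Real.geom_mean_le_arith_mean2_weighted hν.le hν1.le
          (Real.rpow_nonneg (by positivity : (0:ℝ) ≤ u^2) s)
          (Real.rpow_nonneg (by positivity : (0:ℝ) ≤ w^2) t') (by ring)
        calc c i ^ r ≤ (u * w) ^ r := h3
          _ = ((u ^ 2 : ℝ) ^ s) ^ ν * ((w ^ 2 : ℝ) ^ t') ^ (1 - ν) := by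
              rw [h4, h5, h6]
          _ ≤ ν * (u ^ 2) ^ s + (1 - ν) * (w ^ 2) ^ t' := h7
      have hmc1 : (u ^ 2 : ℝ) ^ s ≤ ipR (CFC.rpow (P i) s) x := by
        rw [← hPa]
        exact mccarthy (hPpos i) hx hs1
      have hmc2 : (w ^ 2 : ℝ) ^ t' ≤ ipR (CFC.rpow (Q i) t') x := by
        rw [← hQa]
        exact mccarthy (hQpos i) hx ht1
      calc c i ^ r ≤ ν * (u ^ 2) ^ s + (1 - ν) * (w ^ 2) ^ t' := hchain
        _ ≤ ν * ipR (CFC.rpow (P i) s) x + (1 - ν) * ipR (CFC.rpow (Q i) t') x := by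
            gcongr
    -- sums
    set p : ℝ := ∑ i, ipR (CFC.rpow (P i) s) x with hpdef
    set q : ℝ := ∑ i, ipR (CFC.rpow (Q i) t') x with hqdef
    have hp0 : 0 ≤ p := Finset.sum_nonneg fun i _ => ipR_nonneg (hPssa i) x
    have hq0 : 0 ≤ q := Finset.sum_nonneg fun i _ => ipR_nonneg (hQssa i) x
    have stepD : ∑ i, c i ^ r ≤ ν * p + (1 - ν) * q := by
      calc ∑ i, c i ^ r
          ≤ ∑ i, (ν * ipR (CFC.rpow (P i) s) x + (1 - ν) * ipR (CFC.rpow (Q i) t') x) :=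
            Finset.sum_le_sum fun i _ => stepC i
        _ = ν * p + (1 - ν) * q := by
            rw [Finset.sum_add_distrib, ← Finset.mul_sum, ← Finset.mul_sum]
    -- step E : inner (S x) x
    have stepE : (inner ℂ (S x) x : ℂ) = (↑(ν * p) : ℂ) - Complex.I * (↑((1 - ν) * q) : ℂ) := by
      rw [hSdef]
      rw [ContinuousLinearMap.sum_apply, sum_inner]
      have hterm : ∀ i, (inner ℂ ((((ν : ℂ) • CFC.rpow (P i) s
          + (Complex.I * ((1 - ν : ℝ) : ℂ)) • CFC.rpow (Q i) t')) x) x : ℂ)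
          = (ν : ℂ) * (ipR (CFC.rpow (P i) s) x : ℂ)
            - Complex.I * ((1 - ν : ℝ) : ℂ) * (ipR (CFC.rpow (Q i) t') x : ℂ) := by
        intro i
        rw [ContinuousLinearMap.add_apply, inner_add_left,
          ContinuousLinearMap.smul_apply, ContinuousLinearMap.smul_apply,
          inner_smul_left, inner_smul_left]
        rw [inner_eq_ipR (IsSelfAdjoint.of_nonneg (hPssa i)) x,
          inner_eq_ipR (IsSelfAdjoint.of_nonneg (hQssa i)) x]
        simp [Complex.conj_ofReal, map_mul, Complex.conj_I]
        ring
      rw [Finset.sum_congr rfl fun i _ => hterm i]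
      rw [Finset.sum_sub_distrib, ← Finset.mul_sum, ← Finset.mul_sum]
      push_cast [hpdef, hqdef]
      ring
    -- step F
    have stepF : ν * p + (1 - ν) * q ≤ Real.sqrt 2 * ‖(inner ℂ (S x) x : ℂ)‖ := by
      set a : ℝ := ν * p with hadef
      set b : ℝ := (1 - ν) * q with hbdef
      have ha0 : 0 ≤ a := mul_nonneg hν.le hp0
      have hb0 : 0 ≤ b := mul_nonneg hν1.le hq0
      have hz : ‖(inner ℂ (S x) x : ℂ)‖ ^ 2 = a ^ 2 + b ^ 2 := by
        rw [stepE]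
        rw [Complex.sq_norm, Complex.normSq_apply]
        simp [Complex.sub_re, Complex.sub_im, Complex.mul_re, Complex.mul_im]
        ring
      refine sq_le_helper (by linarith) (by positivity) ?_
      rw [mul_pow, Real.sq_sqrt (by norm_num : (0:ℝ) ≤ 2), hz]
      nlinarith [sq_nonneg (a - b)]
    -- step G : power mean
    have stepG : (∑ i, c i) ^ r ≤ (n : ℝ) ^ (r - 1) * ∑ i, c i ^ r := by
      have hn0 : (0:ℝ) < n := by exact_mod_cast hn
      have hw : ∀ i ∈ Finset.univ (α := Fin n), (0:ℝ) ≤ (1 / n : ℝ) := fun _ _ => by positivity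
      have hw1 : ∑ _i : Fin n, (1 / n : ℝ) = 1 := by
        rw [Finset.sum_const, Finset.card_univ, Fintype.card_fin, nsmul_eq_mul]
        field_simp
      have hz : ∀ i ∈ Finset.univ (α := Fin n), (0:ℝ) ≤ c i := fun i _ => hc0 i
      have key := Real.rpow_arith_mean_le_arith_mean_rpow Finset.univ
        (fun _ => (1 / n : ℝ)) c hw hw1 hz hr1
      have lhs_eq : (∑ i, (1 / n : ℝ) * c i) = (1 / n : ℝ) * ∑ i, c i := by
        rw [Finset.mul_sum]
      have rhs_eq : (∑ i, (1 / n : ℝ) * c i ^ r) = (1 / n : ℝ) * ∑ i, c i ^ r := by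
        rw [Finset.mul_sum]
      rw [lhs_eq, rhs_eq] at key
      have hsum0 : 0 ≤ ∑ i, c i := Finset.sum_nonneg hz
      have expand : ((1 / n : ℝ) * ∑ i, c i) ^ r = (1/n : ℝ) ^ r * (∑ i, c i) ^ r :=
        Real.mul_rpow (by positivity) hsum0
      rw [expand] at key
      -- (∑ c)^r ≤ (1/n)^(-r) * (1/n) * ∑ c^r = n^(r-1) ∑ c^r
      have hnr : (0:ℝ) < (1/n : ℝ) ^ r := Real.rpow_pos_of_pos (by positivity) r
      rw [← le_div_iff₀' hnr] at key
      calc (∑ i, c i) ^ r ≤ (1 / n : ℝ) * (∑ i, c i ^ r) / (1/n : ℝ) ^ r := key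
        _ = (n : ℝ) ^ (r - 1) * ∑ i, c i ^ r := by
            rw [Real.div_rpow (by positivity) (le_of_lt hn0)]
            rw [Real.one_rpow, Real.rpow_sub hn0, Real.rpow_one]
            field_simp
    -- combine
    calc ‖(inner ℂ (T x) x : ℂ)‖ ^ r
        ≤ (∑ i, c i) ^ r := Real.rpow_le_rpow (norm_nonneg _) stepA hr0.le
      _ ≤ (n : ℝ) ^ (r - 1) * ∑ i, c i ^ r := stepG
      _ ≤ (n : ℝ) ^ (r - 1) * (ν * p + (1 - ν) * q) :=
          mul_le_mul_of_nonneg_left stepD (by positivity)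
      _ ≤ (n : ℝ) ^ (r - 1) * (Real.sqrt 2 * ‖(inner ℂ (S x) x : ℂ)‖) :=
          mul_le_mul_of_nonneg_left stepF (by positivity)
      _ ≤ (n : ℝ) ^ (r - 1) * (Real.sqrt 2 * ber k S) :=
          mul_le_mul_of_nonneg_left
            (mul_le_mul_of_nonneg_left (hberS_bound lam) (Real.sqrt_nonneg 2))
            (by positivity)
      _ = M := by rw [hMdef]; ring
  -- conclude
  have hberT0 : 0 ≤ ber k T := by
    rw [ber]; exact Real.iSup_nonneg fun lam => norm_nonneg _
  have hberT : ber k T ≤ M ^ (1 / r) := by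
    rw [ber]
    refine ciSup_le fun lam => ?_
    have h1 := pointwise lam
    have h2 : (‖(inner ℂ (T (k lam)) (k lam) : ℂ)‖ ^ r) ^ (1/r) ≤ M ^ (1/r) :=
      Real.rpow_le_rpow (Real.rpow_nonneg (norm_nonneg _) r) h1 (by positivity)
    rwa [← Real.rpow_mul (norm_nonneg _), mul_one_div, div_self hr0.ne', Real.rpow_one] at h2
  calc ber k T ^ r ≤ (M ^ (1/r)) ^ r := Real.rpow_le_rpow hberT0 hberT hr0.le
    _ = M := by
        rw [← Real.rpow_mul hM0, one_div, inv_mul_cancel₀ hr0.ne', Real.rpow_one]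
end

section
/- Let A, B, X be bounded linear operators on H. Then ber(A*XB) ≤ (1/√2) · ber(B*|X|B + i·A*|X*|A), where i denotes the imaginary unit. -/
set_option synthInstance.maxHeartbeats 1000000
set_option maxHeartbeats 1000000

open scoped NNReal
open ContinuousLinearMap

section Aux

variable {E : Type*} [NormedAddCommGroup E] [InnerProductSpace ℂ E] [CompleteSpace E]

/-- Cauchy–Schwarz for a positive operator. -/
lemma cs_pos (P : E →L[ℂ] E) (hP : 0 ≤ P) (u v : E) :
    ‖(inner ℂ (P u) v : ℂ)‖ ≤
      Real.sqrt ((inner ℂ (P u) u : ℂ).re) * Real.sqrt ((inner ℂ (P v) v : ℂ).re) := by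
  set S : E →L[ℂ] E := CFC.sqrt P with hSdef
  have hS : 0 ≤ S := CFC.sqrt_nonneg _
  have hSS : S * S = P := CFC.sqrt_mul_sqrt_self P hP
  have hSsa : IsSelfAdjoint S := ((nonneg_iff_isPositive S).mp hS).isSelfAdjoint
  have hadj : adjoint S = S := isSelfAdjoint_iff'.mp hSsa
  have happ : ∀ x : E, P x = S (S x) := by
    intro x; conv_lhs => rw [← hSS]
    rw [ContinuousLinearMap.mul_apply]
  have key : ∀ x y : E, (inner ℂ (P x) y : ℂ) = inner ℂ (S x) (S y) := by
    intro x y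
    rw [happ, ← adjoint_inner_right S (S x) y, hadj]
  have hnorm : ∀ x : E, Real.sqrt ((inner ℂ (P x) x : ℂ).re) = ‖S x‖ := by
    intro x
    have h := inner_self_eq_norm_sq (𝕜 := ℂ) (S x)
    rw [key, show ((inner ℂ (S x) (S x) : ℂ)).re = ‖S x‖ ^ 2 from h,
      Real.sqrt_sq (norm_nonneg _)]
  rw [key, hnorm, hnorm]
  exact norm_inner_le_norm _ _

/-- elementary real inequality -/
lemma sqrt_ineq {p n p' n' : ℝ} (hp : 0 ≤ p) (hn : 0 ≤ n) (hp' : 0 ≤ p') (hn' : 0 ≤ n') :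
    Real.sqrt p * Real.sqrt p' + Real.sqrt n * Real.sqrt n' ≤
      Real.sqrt (p + n) * Real.sqrt (p' + n') := by
  set s := Real.sqrt p; set t := Real.sqrt n; set s' := Real.sqrt p'; set t' := Real.sqrt n'
  have hs : 0 ≤ s := Real.sqrt_nonneg _
  have ht : 0 ≤ t := Real.sqrt_nonneg _
  have hs' : 0 ≤ s' := Real.sqrt_nonneg _
  have ht' : 0 ≤ t' := Real.sqrt_nonneg _
  have hps : s ^ 2 = p := Real.sq_sqrt hp
  have hnt : t ^ 2 = n := Real.sq_sqrt hn
  have hps' : s' ^ 2 = p' := Real.sq_sqrt hp'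
  have hnt' : t' ^ 2 = n' := Real.sq_sqrt hn'
  have h1 : (s * s' + t * t') ^ 2 ≤ (p + n) * (p' + n') := by
    rw [← hps, ← hnt, ← hps', ← hnt']
    nlinarith [sq_nonneg (s * t' - t * s')]
  calc s * s' + t * t' = Real.sqrt ((s * s' + t * t') ^ 2) :=
        (Real.sqrt_sq (by positivity)).symm
    _ ≤ Real.sqrt ((p + n) * (p' + n')) := Real.sqrt_le_sqrt h1
    _ = Real.sqrt (p + n) * Real.sqrt (p' + n') := Real.sqrt_mul (by positivity) _

/-- Mixed Schwarz inequality for a selfadjoint operator, in terms of its positive and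
negative parts. -/
lemma cs_selfAdjoint (Z : E →L[ℂ] E) (hZ : IsSelfAdjoint Z) (w w' : E) :
    ‖(inner ℂ (Z w) w' : ℂ)‖ ≤
      Real.sqrt ((inner ℂ ((Z⁺ + Z⁻) w) w : ℂ).re) *
        Real.sqrt ((inner ℂ ((Z⁺ + Z⁻) w') w' : ℂ).re) := by
  have hsub : Z⁺ - Z⁻ = Z := CFC.posPart_sub_negPart Z hZ
  have hpos : (0 : E →L[ℂ] E) ≤ Z⁺ := CFC.posPart_nonneg Z
  have hneg : (0 : E →L[ℂ] E) ≤ Z⁻ := CFC.negPart_nonneg Z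
  have happ : ∀ x : E, Z x = Z⁺ x - Z⁻ x := by
    intro x; conv_lhs => rw [← hsub]
    rw [ContinuousLinearMap.sub_apply]
  have h1 : (inner ℂ (Z w) w' : ℂ) = inner ℂ (Z⁺ w) w' - inner ℂ (Z⁻ w) w' := by
    rw [happ, inner_sub_left]
  have hp : 0 ≤ (inner ℂ (Z⁺ w) w : ℂ).re := by
    exact (Complex.nonneg_iff.mp (((nonneg_iff_isPositive _).mp hpos).inner_nonneg_left (𝕜 := ℂ) w)).1
  have hn : 0 ≤ (inner ℂ (Z⁻ w) w : ℂ).re := by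
    exact (Complex.nonneg_iff.mp (((nonneg_iff_isPositive _).mp hneg).inner_nonneg_left (𝕜 := ℂ) w)).1
  have hp' : 0 ≤ (inner ℂ (Z⁺ w') w' : ℂ).re := by
    exact (Complex.nonneg_iff.mp (((nonneg_iff_isPositive _).mp hpos).inner_nonneg_left (𝕜 := ℂ) w')).1
  have hn' : 0 ≤ (inner ℂ (Z⁻ w') w' : ℂ).re := by
    exact (Complex.nonneg_iff.mp (((nonneg_iff_isPositive _).mp hneg).inner_nonneg_left (𝕜 := ℂ) w')).1
  have hadd : ∀ x : E, (inner ℂ ((Z⁺ + Z⁻) x) x : ℂ).re =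
      (inner ℂ (Z⁺ x) x : ℂ).re + (inner ℂ (Z⁻ x) x : ℂ).re := by
    intro x
    have h : ((Z⁺ + Z⁻) x) = Z⁺ x + Z⁻ x := rfl
    rw [h, inner_add_left, Complex.add_re]
  calc ‖(inner ℂ (Z w) w' : ℂ)‖
      ≤ ‖(inner ℂ (Z⁺ w) w' : ℂ)‖ + ‖(inner ℂ (Z⁻ w) w' : ℂ)‖ := by
        rw [h1]; exact norm_sub_le _ _
    _ ≤ Real.sqrt ((inner ℂ (Z⁺ w) w : ℂ).re) * Real.sqrt ((inner ℂ (Z⁺ w') w' : ℂ).re) +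
          Real.sqrt ((inner ℂ (Z⁻ w) w : ℂ).re) * Real.sqrt ((inner ℂ (Z⁻ w') w' : ℂ).re) :=
        add_le_add (cs_pos _ hpos w w') (cs_pos _ hneg w w')
    _ ≤ Real.sqrt ((inner ℂ (Z⁺ w) w : ℂ).re + (inner ℂ (Z⁻ w) w : ℂ).re) *
          Real.sqrt ((inner ℂ (Z⁺ w') w' : ℂ).re + (inner ℂ (Z⁻ w') w' : ℂ).re) :=
        sqrt_ineq hp hn hp' hn'
    _ = _ := by rw [hadd, hadd]

end Aux

section Mixed

variable {H : Type*} [NormedAddCommGroup H] [InnerProductSpace ℂ H] [CompleteSpace H]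

/-- The mixed Schwarz inequality. -/
lemma mixed_schwarz_s15 (X : H →L[ℂ] H) (u v : H) :
    ‖(inner ℂ (X u) v : ℂ)‖ ≤
      Real.sqrt ((inner ℂ (opAbs X u) u : ℂ).re) *
        Real.sqrt ((inner ℂ (opAbs (adjoint X) v) v : ℂ).re) := by
  classical
  set E := WithLp 2 (H × H) with hE
  let L : E ≃L[ℂ] H × H := WithLp.prodContinuousLinearEquiv 2 ℂ H H
  let M : (H × H) →L[ℂ] H × H :=
    ((adjoint X).comp (ContinuousLinearMap.snd ℂ H H)).prod
      (X.comp (ContinuousLinearMap.fst ℂ H H))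
  let Z : E →L[ℂ] E := (L.symm : (H × H) →L[ℂ] E).comp (M.comp (L : E →L[ℂ] H × H))
  let N : (H × H) →L[ℂ] H × H := (opAbs X).prodMap (opAbs (adjoint X))
  let D : E →L[ℂ] E := (L.symm : (H × H) →L[ℂ] E).comp (N.comp (L : E →L[ℂ] H × H))
  have hXXpos : (0 : H →L[ℂ] H) ≤ adjoint X * X := by
    rw [← ContinuousLinearMap.star_eq_adjoint]
    exact star_mul_self_nonneg X
  have hXXpos' : (0 : H →L[ℂ] H) ≤ X * adjoint X := by
    rw [← ContinuousLinearMap.star_eq_adjoint]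
    exact mul_star_self_nonneg X
  have habsX : 0 ≤ opAbs X := CFC.sqrt_nonneg _
  have habsX' : 0 ≤ opAbs (adjoint X) := CFC.sqrt_nonneg _
  have habsX2 : opAbs X * opAbs X = adjoint X * X :=
    CFC.sqrt_mul_sqrt_self _ hXXpos
  have habsX'2 : opAbs (adjoint X) * opAbs (adjoint X) = X * adjoint X := by
    rw [opAbs, adjoint_adjoint]
    exact CFC.sqrt_mul_sqrt_self _ hXXpos'
  -- applications
  have hZapp : ∀ w : E, Z w = L.symm (adjoint X (L w).2, X (L w).1) := fun w => rfl
  have hDapp : ∀ w : E, D w = L.symm (opAbs X (L w).1, opAbs (adjoint X) (L w).2) :=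
    fun w => rfl
  have hLsymm : ∀ x : H × H, L (L.symm x) = x := fun x => L.apply_symm_apply x
  have hinner' : ∀ (w w' : E),
      (inner ℂ w w' : ℂ) = inner ℂ (L w).1 (L w').1 + inner ℂ (L w).2 (L w').2 := by
    intro w w'
    rw [WithLp.prod_inner_apply]
    rfl
  -- Z is selfadjoint
  have hZsa : IsSelfAdjoint Z := by
    rw [isSelfAdjoint_iff_isSymmetric]
    intro w w'
    show (inner ℂ (Z w) w' : ℂ) = inner ℂ w (Z w')
    rw [hZapp w, hZapp w', hinner', hinner', hLsymm, hLsymm]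
    rw [adjoint_inner_left, ← adjoint_inner_right]
    ring
  -- D is nonneg
  have hDpos : 0 ≤ D := by
    rw [nonneg_iff_isPositive]
    constructor
    · change LinearMap.IsSymmetric (D : E →ₗ[ℂ] E)
      intro w w'
      show (inner ℂ (D w) w' : ℂ) = inner ℂ w (D w')
      rw [hDapp w, hDapp w', hinner', hinner', hLsymm, hLsymm]
      have hA1 : adjoint (opAbs X) = opAbs X :=
        isSelfAdjoint_iff'.mp ((nonneg_iff_isPositive _).mp habsX).isSelfAdjoint
      have hA2 : adjoint (opAbs (adjoint X)) = opAbs (adjoint X) :=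
        isSelfAdjoint_iff'.mp ((nonneg_iff_isPositive _).mp habsX').isSelfAdjoint
      conv_lhs => rw [← hA1, ← hA2]
      rw [adjoint_inner_left, adjoint_inner_left]
    · intro w
      have h1 := ((nonneg_iff_isPositive _).mp habsX).inner_nonneg_left (𝕜 := ℂ) (L w).1
      have h2 := ((nonneg_iff_isPositive _).mp habsX').inner_nonneg_left (𝕜 := ℂ) (L w).2
      rw [ContinuousLinearMap.reApplyInnerSelf_apply]
      rw [hDapp w, hinner', hLsymm]
      simpa using add_nonneg (Complex.nonneg_iff.mp h1).1 (Complex.nonneg_iff.mp h2).1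
  -- D * D = Z * Z
  have hDD : D * D = Z * Z := by
    ext w
    show D (D w) = Z (Z w)
    rw [hDapp, hDapp, hZapp, hZapp, hLsymm, hLsymm]
    have c1 : (opAbs X) ((opAbs X) (L w).1) = adjoint X (X (L w).1) := by
      have h := ContinuousLinearMap.ext_iff.mp habsX2 (L w).1
      simpa [ContinuousLinearMap.mul_apply] using h
    have c2 : (opAbs (adjoint X)) ((opAbs (adjoint X)) (L w).2) = X (adjoint X (L w).2) := by
      have h := ContinuousLinearMap.ext_iff.mp habsX'2 (L w).2
      simpa [ContinuousLinearMap.mul_apply] using h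
    congr 1
    simp [Prod.ext_iff, c1, c2]
  -- pos/neg parts of Z sum to D
  have hZsum : Z⁺ + Z⁻ = D := by
    have hsub : Z⁺ - Z⁻ = Z := CFC.posPart_sub_negPart Z hZsa
    have hpn : Z⁺ * Z⁻ = 0 := CFC.posPart_mul_negPart Z
    have hnp : Z⁻ * Z⁺ = 0 := CFC.negPart_mul_posPart Z
    have hsq : (Z⁺ + Z⁻) * (Z⁺ + Z⁻) = Z * Z := by
      have e1 : (Z⁺ + Z⁻) * (Z⁺ + Z⁻) = Z⁺ * Z⁺ + Z⁻ * Z⁻ := by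
        rw [add_mul, mul_add, mul_add, hpn, hnp]
        abel
      have e2 : Z * Z = Z⁺ * Z⁺ + Z⁻ * Z⁻ := by
        conv_lhs => rw [← hsub]
        rw [sub_mul, mul_sub, mul_sub, hpn, hnp]
        abel
      rw [e1, e2]
    have hpnpos : 0 ≤ Z⁺ + Z⁻ := add_nonneg (CFC.posPart_nonneg Z) (CFC.negPart_nonneg Z)
    have u1 : CFC.sqrt (Z * Z) = Z⁺ + Z⁻ := CFC.sqrt_unique hsq hpnpos
    have u2 : CFC.sqrt (Z * Z) = D := by
      rw [← hDD]
      exact CFC.sqrt_unique rfl hDpos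
    rw [← u1, u2]
  -- apply the selfadjoint mixed Schwarz inequality
  set w : E := L.symm (u, 0) with hw_def
  set w' : E := L.symm (0, v) with hw'_def
  have hw : L w = (u, 0) := hLsymm _
  have hw' : L w' = (0, v) := hLsymm _
  have key := cs_selfAdjoint Z hZsa w w'
  rw [hZsum] at key
  have e1 : (inner ℂ (Z w) w' : ℂ) = inner ℂ (X u) v := by
    rw [hZapp w, hinner', hLsymm, hw, hw']
    simp
  have e2 : (inner ℂ (D w) w : ℂ).re = (inner ℂ (opAbs X u) u : ℂ).re := by
    rw [hDapp w, hinner', hLsymm, hw]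
    simp
  have e3 : (inner ℂ (D w') w' : ℂ).re = (inner ℂ (opAbs (adjoint X) v) v : ℂ).re := by
    rw [hDapp w', hinner', hLsymm, hw']
    simp
  rw [e1, e2, e3] at key
  exact key

end Mixed

theorem berezin_triple_product_abs
    {H : Type*} [NormedAddCommGroup H] [InnerProductSpace ℂ H] [CompleteSpace H]
    {Ω : Type*} [Nonempty Ω] (k : Ω → H) (hk : ∀ lam, ‖k lam‖ = 1)
    (A B X : H →L[ℂ] H) :
    ber k (adjoint A * X * B) ≤
      (1 / Real.sqrt 2)
        * ber k (adjoint B * opAbs X * B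
            + Complex.I • (adjoint A * opAbs (adjoint X) * A)) := by
  set R : H →L[ℂ] H := adjoint B * opAbs X * B + Complex.I • (adjoint A * opAbs (adjoint X) * A)
    with hR
  have hbdd : BddAbove (Set.range fun lam : Ω => ‖(inner ℂ (R (k lam)) (k lam) : ℂ)‖) := by
    refine ⟨‖R‖, ?_⟩
    rintro _ ⟨lam, rfl⟩
    calc ‖(inner ℂ (R (k lam)) (k lam) : ℂ)‖ ≤ ‖R (k lam)‖ * ‖k lam‖ := norm_inner_le_norm _ _
      _ ≤ ‖R‖ * ‖k lam‖ * ‖k lam‖ :=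
        mul_le_mul_of_nonneg_right (R.le_opNorm _) (norm_nonneg _)
      _ = ‖R‖ := by rw [hk]; ring
  have hsqrt2 : (0:ℝ) < Real.sqrt 2 := Real.sqrt_pos.mpr (by norm_num)
  refine ciSup_le fun lam => ?_
  set u := B (k lam) with hu
  set v := A (k lam) with hv
  have habsX : 0 ≤ opAbs X := CFC.sqrt_nonneg _
  have habsX' : 0 ≤ opAbs (adjoint X) := CFC.sqrt_nonneg _
  have hPX := (nonneg_iff_isPositive _).mp habsX
  have hPX' := (nonneg_iff_isPositive _).mp habsX'
  set a : ℝ := (inner ℂ (opAbs X u) u : ℂ).re with ha_def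
  set b : ℝ := (inner ℂ (opAbs (adjoint X) v) v : ℂ).re with hb_def
  have ha0 : 0 ≤ a := by exact (Complex.nonneg_iff.mp (hPX.inner_nonneg_left (𝕜 := ℂ) u)).1
  have hb0 : 0 ≤ b := by exact (Complex.nonneg_iff.mp (hPX'.inner_nonneg_left (𝕜 := ℂ) v)).1
  have haC : ((a : ℂ)) = inner ℂ (opAbs X u) u := by
    simpa [ha_def] using (((isPositive_iff_complex _).mp hPX) u).1
  have hbC : ((b : ℂ)) = inner ℂ (opAbs (adjoint X) v) v := by
    simpa [hb_def] using (((isPositive_iff_complex _).mp hPX') v).1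
  have hL : (inner ℂ ((adjoint A * X * B) (k lam)) (k lam) : ℂ) = inner ℂ (X u) v := by
    show (inner ℂ (adjoint A (X (B (k lam)))) (k lam) : ℂ) = _
    rw [adjoint_inner_left]
  have hRval : (inner ℂ (R (k lam)) (k lam) : ℂ) = (a : ℂ) - Complex.I * b := by
    have h1 : R (k lam)
        = adjoint B (opAbs X u) + Complex.I • (adjoint A (opAbs (adjoint X) v)) := rfl
    rw [h1, inner_add_left, inner_smul_left, adjoint_inner_left, adjoint_inner_left]
    rw [← haC, ← hbC]
    simp [Complex.conj_I]
    ring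
  have hRnorm : ‖(inner ℂ (R (k lam)) (k lam) : ℂ)‖ = Real.sqrt (a ^ 2 + b ^ 2) := by
    rw [hRval]
    have hre : ((a : ℂ) - Complex.I * b).re = a := by simp
    have him : ((a : ℂ) - Complex.I * b).im = -b := by simp
    rw [Complex.norm_def, Complex.normSq_apply, hre, him]
    congr 1
    ring
  have step1 : ‖(inner ℂ ((adjoint A * X * B) (k lam)) (k lam) : ℂ)‖ ≤
      Real.sqrt a * Real.sqrt b := by
    rw [hL]
    exact mixed_schwarz_s15 X u v
  have step2 : Real.sqrt a * Real.sqrt b ≤ (1 / Real.sqrt 2) * Real.sqrt (a ^ 2 + b ^ 2) := by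
    rw [← Real.sqrt_mul ha0, div_mul_eq_mul_div, one_mul, le_div_iff₀ hsqrt2]
    calc Real.sqrt (a * b) * Real.sqrt 2 = Real.sqrt (a * b * 2) :=
          (Real.sqrt_mul (by positivity) 2).symm
      _ ≤ Real.sqrt (a ^ 2 + b ^ 2) := Real.sqrt_le_sqrt (by nlinarith [sq_nonneg (a - b)])
  have step3 : Real.sqrt (a ^ 2 + b ^ 2) ≤ ber k R := by
    rw [← hRnorm]
    exact le_ciSup hbdd lam
  calc ‖(inner ℂ ((adjoint A * X * B) (k lam)) (k lam) : ℂ)‖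
      ≤ (1 / Real.sqrt 2) * Real.sqrt (a ^ 2 + b ^ 2) := step1.trans step2
    _ ≤ (1 / Real.sqrt 2) * ber k R :=
        mul_le_mul_of_nonneg_left step3 (by positivity)
end

section
/- Let A be a bounded linear operator on H. Then ber(A) ≤ (1/√2) · ber(|A| + i·|A*|), where i denotes the imaginary unit. -/
set_option synthInstance.maxHeartbeats 1000000
set_option maxHeartbeats 1000000

open scoped NNReal
open ContinuousLinearMap

section Aux

variable {H : Type*} [NormedAddCommGroup H] [InnerProductSpace ℂ H] [CompleteSpace H]

local notation "⟪" x ", " y "⟫" => @inner ℂ _ _ x y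

private lemma inner_re_le_of_le' {T S : H →L[ℂ] H} (h : T ≤ S) (x : H) :
    (⟪T x, x⟫).re ≤ (⟪S x, x⟫).re := by
  have h2 := ((le_def T S).mp h).inner_nonneg_left x
  simp only [sub_apply, inner_sub_left, RCLike.re_to_complex, Complex.sub_re] at h2
  have h3 := (Complex.le_def.mp h2).1
  simp only [Complex.zero_re, Complex.sub_re] at h3
  linarith

private lemma inner_self_real' {T : H →L[ℂ] H} (hT : IsSelfAdjoint T) (x : H) :
    ⟪T x, x⟫ = ((⟪T x, x⟫).re : ℂ) := by
  have h : starRingEnd ℂ ⟪T x, x⟫ = ⟪T x, x⟫ := by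
    rw [inner_conj_symm, ← adjoint_inner_right, hT.adjoint_eq]
  exact (Complex.conj_eq_iff_re.mp h).symm

private lemma inner_sq_self' (T : H →L[ℂ] H) (x : H) :
    ‖T x‖ ^ 2 = (⟪(adjoint T * T) x, x⟫).re := by
  rw [ContinuousLinearMap.mul_apply, ← adjoint_inner_right, adjoint_adjoint]
  exact (inner_self_eq_norm_sq (𝕜 := ℂ) (T x)).symm

private lemma sqrt_eq_cfc_real {B : H →L[ℂ] H} (hB : 0 ≤ B) :
    CFC.sqrt B = cfc Real.sqrt B := by
  have h1 : cfc Real.sqrt B * cfc Real.sqrt B = B := by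
    rw [← cfc_mul ..]
    exact cfc_congr (fun t ht => Real.mul_self_sqrt
      (spectrum_nonneg_of_nonneg hB ht)) |>.trans (cfc_id ℝ B)
  exact CFC.sqrt_unique (a := B) (b := cfc Real.sqrt B) h1
    (cfc_nonneg fun t _ => Real.sqrt_nonneg t)

private lemma aeval_intertwine' (a c b : H →L[ℂ] H) (h : a * b = b * c) (p : Polynomial ℝ) :
    Polynomial.aeval a p * b = b * Polynomial.aeval c p := by
  have hpow : ∀ n : ℕ, a ^ n * b = b * c ^ n := by
    intro n
    induction n with
    | zero => simp
    | succ n ih => rw [pow_succ, pow_succ, mul_assoc, h, ← mul_assoc, ih, mul_assoc]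
  induction p using Polynomial.induction_on' with
  | add p q hp hq => simp [map_add, add_mul, mul_add, hp, hq]
  | monomial n r =>
      simp only [Polynomial.aeval_monomial]
      rw [mul_assoc, hpow, ← mul_assoc, ← mul_assoc]
      congr 1
      rw [Algebra.commutes]

private lemma cfc_intertwine' (a c b : H →L[ℂ] H) (ha : IsSelfAdjoint a)
    (hc : IsSelfAdjoint c) (h : a * b = b * c) (f : ℝ → ℝ) (hf : Continuous f) :
    cfc f a * b = b * cfc f c := by
  have key : ∀ ε : ℝ, 0 < ε → ‖cfc f a * b - b * cfc f c‖ ≤ ε * (2 * ‖b‖) := by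
    intro ε hε
    obtain ⟨r₁, hr₁, h₁⟩ := (spectrum.isCompact (𝕜 := ℝ) a).isBounded.subset_closedBall_lt 0 0
    obtain ⟨r₂, hr₂, h₂⟩ := (spectrum.isCompact (𝕜 := ℝ) c).isBounded.subset_closedBall_lt 0 0
    set M := max r₁ r₂ with hM
    have hsa : spectrum ℝ a ⊆ Set.Icc (-M) M := by
      refine h₁.trans ?_
      rw [Real.closedBall_eq_Icc]
      exact Set.Icc_subset_Icc (by simp [hM]) (by simp [hM])
    have hsc : spectrum ℝ c ⊆ Set.Icc (-M) M := by
      refine h₂.trans ?_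
      rw [Real.closedBall_eq_Icc]
      exact Set.Icc_subset_Icc (by simp [hM]) (by simp [hM])
    obtain ⟨p, hp⟩ := exists_polynomial_near_of_continuousOn (-M) M f hf.continuousOn ε hε
    have hpa : ‖cfc f a - Polynomial.aeval a p‖ ≤ ε := by
      rw [← cfc_polynomial p a, ← cfc_sub ..]
      refine norm_cfc_le hε.le fun t ht => ?_
      have := hp t (hsa ht)
      rw [Real.norm_eq_abs, abs_sub_comm]
      exact this.le
    have hpc : ‖cfc f c - Polynomial.aeval c p‖ ≤ ε := by
      rw [← cfc_polynomial p c, ← cfc_sub ..]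
      refine norm_cfc_le hε.le fun t ht => ?_
      have := hp t (hsc ht)
      rw [Real.norm_eq_abs, abs_sub_comm]
      exact this.le
    calc ‖cfc f a * b - b * cfc f c‖
        = ‖(cfc f a - Polynomial.aeval a p) * b + b * (Polynomial.aeval c p - cfc f c)‖ := by
          rw [sub_mul, mul_sub, aeval_intertwine' a c b h p]; abel_nf
      _ ≤ ‖(cfc f a - Polynomial.aeval a p) * b‖ + ‖b * (Polynomial.aeval c p - cfc f c)‖ :=
          norm_add_le _ _
      _ ≤ ‖cfc f a - Polynomial.aeval a p‖ * ‖b‖ + ‖b‖ * ‖Polynomial.aeval c p - cfc f c‖ := by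
          gcongr <;> [exact norm_mul_le _ _; exact norm_mul_le _ _]
      _ ≤ ε * ‖b‖ + ‖b‖ * ε := by
          rw [norm_sub_rev (Polynomial.aeval c p)] at *
          gcongr
      _ = ε * (2 * ‖b‖) := by ring
  have hnorm : ‖cfc f a * b - b * cfc f c‖ ≤ 0 := by
    refine le_of_forall_pos_le_add fun ε hε => ?_
    have hk := key (ε / (2 * ‖b‖ + 1)) (by positivity)
    calc ‖cfc f a * b - b * cfc f c‖ ≤ ε / (2 * ‖b‖ + 1) * (2 * ‖b‖) := hk
      _ ≤ ε := by
          rw [div_mul_eq_mul_div, div_le_iff₀ (by positivity)]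
          nlinarith [norm_nonneg b, hε]
      _ = 0 + ε := by ring
  exact sub_eq_zero.mp (norm_le_zero_iff.mp hnorm)

private lemma mixed_schwarz' (A : H →L[ℂ] H) (x : H) (hx : ‖x‖ = 1) :
    ‖⟪A x, x⟫‖ ^ 2 ≤ (⟪opAbs A x, x⟫).re * (⟪opAbs (adjoint A) x, x⟫).re := by
  set B := adjoint A * A with hBdef
  set C := A * adjoint A with hCdef
  have hB : (0 : H →L[ℂ] H) ≤ B := by
    simpa [hBdef, star_eq_adjoint] using star_mul_self_nonneg A
  have hC : (0 : H →L[ℂ] H) ≤ C := by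
    simpa [hCdef, star_eq_adjoint] using mul_star_self_nonneg A
  have hBsa : IsSelfAdjoint B := .of_nonneg hB
  have hCsa : IsSelfAdjoint C := .of_nonneg hC
  have hBspec : ∀ t ∈ spectrum ℝ B, 0 ≤ t := fun t ht => spectrum_nonneg_of_nonneg hB ht
  have hCspec : ∀ t ∈ spectrum ℝ C, 0 ≤ t := fun t ht => spectrum_nonneg_of_nonneg hC ht
  have hPA : opAbs A = cfc Real.sqrt B := sqrt_eq_cfc_real hB
  have hPA' : opAbs (adjoint A) = cfc Real.sqrt C := by
    rw [opAbs, adjoint_adjoint, ← hCdef]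
    exact sqrt_eq_cfc_real hC
  set a := (⟪opAbs A x, x⟫).re with hadef
  set b := (⟪opAbs (adjoint A) x, x⟫).re with hbdef
  have hb0 : 0 ≤ b := by
    have := inner_re_le_of_le' (T := 0) (S := opAbs (adjoint A)) (CFC.sqrt_nonneg _) x
    simpa using this
  -- main estimate with regularization ε
  have key : ∀ ε : ℝ, 0 < ε → ‖⟪A x, x⟫‖ ^ 2 ≤ (a + Real.sqrt ε) * b := by
    intro ε hε
    set s : ℝ → ℝ := fun t => Real.sqrt (Real.sqrt (max t 0 + ε)) with hsdef
    have hs_pos : ∀ t, 0 < s t := fun t =>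
      Real.sqrt_pos.mpr (Real.sqrt_pos.mpr (by positivity))
    have hs_cont : Continuous s := by
      apply Real.continuous_sqrt.comp
      apply Real.continuous_sqrt.comp
      exact (continuous_id.max continuous_const).add continuous_const
    have hsinv_cont : Continuous fun t => (s t)⁻¹ :=
      hs_cont.inv₀ fun t => (hs_pos t).ne'
    set p := cfc s B with hpdef
    set q := cfc (fun t => (s t)⁻¹) B with hqdef
    have hpsa : IsSelfAdjoint p := cfc_predicate s B
    have hqsa : IsSelfAdjoint q := cfc_predicate _ B
    have hqp : q * p = 1 := by
      rw [hpdef, hqdef, ← cfc_mul _ _ B hsinv_cont.continuousOn hs_cont.continuousOn]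
      rw [show (fun t => (s t)⁻¹ * s t) = fun _ : ℝ => (1 : ℝ) from
        funext fun t => inv_mul_cancel₀ (hs_pos t).ne']
      rw [cfc_const 1 B, map_one]
    -- rewrite the inner product
    have hsplit : ⟪A x, x⟫ = ⟪p x, q (adjoint A x)⟫ := by
      conv_lhs => rw [show A = A * (q * p) by rw [hqp, mul_one]]
      rw [show (A * (q * p)) x = A (q (p x)) by
        simp [ContinuousLinearMap.mul_apply]]
      rw [← adjoint_inner_right]
      -- now ⟪q (p x), adjoint A x⟫ = ⟪p x, q (adjoint A x)⟫
      conv_lhs => rw [show q = adjoint q from hqsa.adjoint_eq.symm]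
      rw [adjoint_inner_left]
    have hCS : ‖⟪A x, x⟫‖ ≤ ‖p x‖ * ‖q (adjoint A x)‖ := by
      rw [hsplit]; exact norm_inner_le_norm _ _
    -- bound ‖p x‖²
    have hpx : ‖p x‖ ^ 2 ≤ a + Real.sqrt ε := by
      rw [inner_sq_self' p x, hpsa.adjoint_eq]
      have hpp : p * p = cfc (fun t => Real.sqrt (max t 0 + ε)) B := by
        rw [hpdef, ← cfc_mul s s B hs_cont.continuousOn hs_cont.continuousOn]
        congr 1
        funext t
        exact Real.mul_self_sqrt (Real.sqrt_nonneg _)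
      have hle : cfc (fun t => Real.sqrt (max t 0 + ε)) B ≤
          cfc (fun t => Real.sqrt t + Real.sqrt ε) B := by
        refine cfc_mono fun t ht => ?_
        have ht0 := hBspec t ht
        rw [max_eq_left ht0]
        nlinarith [Real.sq_sqrt (add_nonneg ht0 hε.le), Real.sq_sqrt ht0,
          Real.sq_sqrt hε.le, Real.sqrt_nonneg (t + ε), Real.sqrt_nonneg t,
          Real.sqrt_nonneg ε, sq_nonneg (Real.sqrt t + Real.sqrt ε - Real.sqrt (t + ε))]
      have heq : cfc (fun t => Real.sqrt t + Real.sqrt ε) B =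
          cfc Real.sqrt B + algebraMap ℝ (H →L[ℂ] H) (Real.sqrt ε) :=
        cfc_add_const (Real.sqrt ε) Real.sqrt B Real.continuous_sqrt.continuousOn hBsa
      rw [hpp]
      refine (inner_re_le_of_le' (hle.trans_eq heq) x).trans ?_
      rw [add_apply, inner_add_left, Complex.add_re, Algebra.algebraMap_eq_smul_one,
        smul_apply, ContinuousLinearMap.one_apply]
      have : ⟪(Real.sqrt ε : ℝ) • x, x⟫ = (Real.sqrt ε : ℝ) • ⟪x, x⟫ := by
        rw [show ((Real.sqrt ε : ℝ) • x) = ((Real.sqrt ε : ℝ) : ℂ) • x from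
          (algebraMap_smul ℂ _ x).symm]
        exact inner_smul_real_left x x (Real.sqrt ε)
      rw [this]
      have hxx : ⟪x, x⟫ = (1 : ℂ) := by
        rw [@inner_self_eq_norm_sq_to_K ℂ, hx]; norm_num
      rw [hxx, ← hPA]
      simp [hadef]
    -- bound ‖q (adjoint A x)‖²
    have hqx : ‖q (adjoint A x)‖ ^ 2 ≤ b := by
      rw [inner_sq_self' q (adjoint A x), hqsa.adjoint_eq]
      have hmove : ⟪(q * q) (adjoint A x), adjoint A x⟫ =
          ⟪(A * (q * q) * adjoint A) x, x⟫ := by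
        rw [adjoint_inner_right]
        simp [ContinuousLinearMap.mul_apply]
      rw [hmove]
      have hqq : q * q = cfc (fun t => (Real.sqrt (max t 0 + ε))⁻¹) B := by
        rw [hqdef, ← cfc_mul _ _ B hsinv_cont.continuousOn hsinv_cont.continuousOn]
        congr 1
        funext t
        rw [← mul_inv]
        congr 1
        exact Real.mul_self_sqrt (Real.sqrt_nonneg _)
      have hint : A * B = C * A := by rw [hBdef, hCdef, mul_assoc]
      have hgc : Continuous fun t : ℝ => (Real.sqrt (max t 0 + ε))⁻¹ := by
        have h1 : Continuous fun t : ℝ => Real.sqrt (max t 0 + ε) :=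
          Real.continuous_sqrt.comp
            ((continuous_id.max continuous_const).add continuous_const)
        exact h1.inv₀ fun t =>
          (Real.sqrt_pos.mpr (add_pos_of_nonneg_of_pos (le_max_right t 0) hε)).ne'
      have hAqq : A * (q * q) =
          cfc (fun t => (Real.sqrt (max t 0 + ε))⁻¹) C * A := by
        rw [hqq]
        exact (cfc_intertwine' C B A hCsa hBsa hint.symm _ hgc).symm
      have hD : A * (q * q) * adjoint A =
          cfc (fun t => (Real.sqrt (max t 0 + ε))⁻¹ * t) C := by
        rw [hAqq, mul_assoc, ← hCdef,
          cfc_mul _ _ C hgc.continuousOn continuous_id'.continuousOn,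
          cfc_id' ℝ C (ha := hCsa)]
      have hle : cfc (fun t => (Real.sqrt (max t 0 + ε))⁻¹ * t) C ≤ cfc Real.sqrt C := by
        refine cfc_mono (fun t ht => ?_) (hgc.mul continuous_id').continuousOn
          Real.continuous_sqrt.continuousOn
        have ht0 := hCspec t ht
        rw [max_eq_left ht0]
        rcases eq_or_lt_of_le ht0 with h0 | h0
        · simp [← h0]
        · have h1 : Real.sqrt t ≤ Real.sqrt (t + ε) := Real.sqrt_le_sqrt (by linarith)
          have h2 : 0 < Real.sqrt t := Real.sqrt_pos.mpr h0
          have h3 : (Real.sqrt (t + ε))⁻¹ ≤ (Real.sqrt t)⁻¹ :=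
            inv_anti₀ h2 h1
          calc (Real.sqrt (t + ε))⁻¹ * t ≤ (Real.sqrt t)⁻¹ * t := by
                exact mul_le_mul_of_nonneg_right h3 ht0
            _ = t / Real.sqrt t := by rw [div_eq_inv_mul]
            _ = Real.sqrt t := Real.div_sqrt
      rw [hD]
      refine (inner_re_le_of_le' hle x).trans ?_
      rw [hbdef, hPA']
    -- combine
    calc ‖⟪A x, x⟫‖ ^ 2 ≤ (‖p x‖ * ‖q (adjoint A x)‖) ^ 2 := by
          have h0 : (0:ℝ) ≤ ‖⟪A x, x⟫‖ := norm_nonneg _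
          nlinarith [hCS]
      _ = ‖p x‖ ^ 2 * ‖q (adjoint A x)‖ ^ 2 := by ring
      _ ≤ (a + Real.sqrt ε) * b := by
          have h1 : (0:ℝ) ≤ ‖p x‖ ^ 2 := sq_nonneg _
          have h2 : (0:ℝ) ≤ ‖q (adjoint A x)‖ ^ 2 := sq_nonneg _
          exact mul_le_mul hpx hqx h2 (by nlinarith)
  -- let ε → 0
  refine le_of_forall_pos_le_add fun δ hδ => ?_
  have hεpos : (0:ℝ) < (δ / (b + 1)) ^ 2 := by positivity
  have hk := key _ hεpos
  have hsq : Real.sqrt ((δ / (b + 1)) ^ 2) = δ / (b + 1) :=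
    Real.sqrt_sq (by positivity)
  rw [hsq] at hk
  calc ‖⟪A x, x⟫‖ ^ 2 ≤ (a + δ / (b + 1)) * b := hk
    _ = a * b + δ / (b + 1) * b := by ring
    _ ≤ a * b + δ := by
        have : δ / (b + 1) * b ≤ δ := by
          rw [div_mul_eq_mul_div, div_le_iff₀ (by linarith)]
          nlinarith
        linarith

private lemma pointwise_bound' (A : H →L[ℂ] H) (x : H) (hx : ‖x‖ = 1) :
    ‖⟪A x, x⟫‖ ≤ (1 / Real.sqrt 2) *
      ‖⟪(opAbs A + Complex.I • opAbs (adjoint A)) x, x⟫‖ := by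
  set a := (⟪opAbs A x, x⟫).re with hadef
  set b := (⟪opAbs (adjoint A) x, x⟫).re with hbdef
  have hPsa : IsSelfAdjoint (opAbs A) := .of_nonneg (CFC.sqrt_nonneg _)
  have hQsa : IsSelfAdjoint (opAbs (adjoint A)) := .of_nonneg (CFC.sqrt_nonneg _)
  have ha0 : 0 ≤ a := by
    have := inner_re_le_of_le' (T := 0) (S := opAbs A) (CFC.sqrt_nonneg _) x
    simpa using this
  have hb0 : 0 ≤ b := by
    have := inner_re_le_of_le' (T := 0) (S := opAbs (adjoint A)) (CFC.sqrt_nonneg _) x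
    simpa using this
  have hz : ⟪(opAbs A + Complex.I • opAbs (adjoint A)) x, x⟫ =
      (a : ℂ) - Complex.I * (b : ℂ) := by
    rw [add_apply, inner_add_left, smul_apply, inner_smul_left]
    rw [← inner_self_real' hPsa, ← inner_self_real' hQsa] at *
    rw [inner_self_real' hPsa, inner_self_real' hQsa]
    simp [Complex.conj_I]
    ring
  have hznorm : ‖⟪(opAbs A + Complex.I • opAbs (adjoint A)) x, x⟫‖ ^ 2 = a ^ 2 + b ^ 2 := by
    rw [hz]
    rw [show (a : ℂ) - Complex.I * (b : ℂ) = Complex.mk a (-b) by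
      apply Complex.ext <;> simp]
    rw [Complex.sq_norm, Complex.normSq_mk]
    ring
  have hms := mixed_schwarz' A x hx
  rw [← hadef, ← hbdef] at hms
  have hX0 : (0:ℝ) ≤ ‖⟪A x, x⟫‖ := norm_nonneg _
  have hY0 : (0:ℝ) ≤ (1 / Real.sqrt 2) *
      ‖⟪(opAbs A + Complex.I • opAbs (adjoint A)) x, x⟫‖ := by positivity
  have hsq2 : Real.sqrt 2 ^ 2 = 2 := Real.sq_sqrt (by norm_num)
  have h2pos : (0:ℝ) < Real.sqrt 2 := Real.sqrt_pos.mpr (by norm_num)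
  have hsqle : ‖⟪A x, x⟫‖ ^ 2 ≤ ((1 / Real.sqrt 2) *
      ‖⟪(opAbs A + Complex.I • opAbs (adjoint A)) x, x⟫‖) ^ 2 := by
    rw [mul_pow, hznorm, div_pow, hsq2, one_pow]
    calc ‖⟪A x, x⟫‖ ^ 2 ≤ a * b := hms
      _ ≤ (a ^ 2 + b ^ 2) / 2 := by nlinarith [sq_nonneg (a - b)]
      _ = 1 / 2 * (a ^ 2 + b ^ 2) := by ring
  calc ‖⟪A x, x⟫‖ = Real.sqrt (‖⟪A x, x⟫‖ ^ 2) := (Real.sqrt_sq hX0).symm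
    _ ≤ Real.sqrt (((1 / Real.sqrt 2) *
        ‖⟪(opAbs A + Complex.I • opAbs (adjoint A)) x, x⟫‖) ^ 2) :=
          Real.sqrt_le_sqrt hsqle
    _ = _ := Real.sqrt_sq hY0

end Aux

theorem berezin_abs_plus_I_abs
    {H : Type*} [NormedAddCommGroup H] [InnerProductSpace ℂ H] [CompleteSpace H]
    {Ω : Type*} [Nonempty Ω] (k : Ω → H) (hk : ∀ lam, ‖k lam‖ = 1)
    (A : H →L[ℂ] H) :
    ber k A ≤ (1 / Real.sqrt 2) * ber k (opAbs A + Complex.I • opAbs (adjoint A)) := by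
  set T := opAbs A + Complex.I • opAbs (adjoint A) with hTdef
  have hbdd : BddAbove (Set.range fun lam : Ω => ‖(inner ℂ (T (k lam)) (k lam) : ℂ)‖) := by
    refine ⟨‖T‖, ?_⟩
    rintro r ⟨lam, rfl⟩
    calc ‖(inner ℂ (T (k lam)) (k lam) : ℂ)‖ ≤ ‖T (k lam)‖ * ‖k lam‖ := norm_inner_le_norm _ _
      _ ≤ ‖T‖ * ‖k lam‖ * ‖k lam‖ := by
          gcongr
          exact le_opNorm T (k lam)
      _ = ‖T‖ := by rw [hk lam]; ring
  refine ciSup_le fun lam => ?_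
  have hpt := pointwise_bound' A (k lam) (hk lam)
  refine hpt.trans ?_
  have hle : ‖(inner ℂ (T (k lam)) (k lam) : ℂ)‖ ≤ ber k T := le_ciSup hbdd lam
  have hc : (0:ℝ) ≤ 1 / Real.sqrt 2 := by positivity
  exact mul_le_mul_of_nonneg_left hle hc
end

section
/- Let A, B be bounded linear operators on H. Then for every real number r ≥ 1, ber(A*B)^r ≤ (1/√2) · ber(|B|^{2r} + i·|A|^{2r}), where i denotes the imaginary unit. -/
set_option synthInstance.maxHeartbeats 1000000
set_option maxHeartbeats 1000000

open scoped NNReal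
open ContinuousLinearMap

section Helpers

variable {H : Type*} [NormedAddCommGroup H] [InnerProductSpace ℂ H] [CompleteSpace H]

private lemma re_inner_nonneg {T : H →L[ℂ] H} (hT : 0 ≤ T) (x : H) :
    0 ≤ (inner ℂ (T x) x : ℂ).re := by
  rw [ContinuousLinearMap.nonneg_iff_isPositive] at hT
  exact (Complex.nonneg_iff.mp (hT.inner_nonneg_left x)).1

private lemma re_inner_mono {T U : H →L[ℂ] H} (h : T ≤ U) (x : H) :
    (inner ℂ (T x) x : ℂ).re ≤ (inner ℂ (U x) x : ℂ).re := by
  have h0 : 0 ≤ (inner ℂ ((U - T) x) x : ℂ).re :=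
    re_inner_nonneg (sub_nonneg.mpr h) x
  simp only [ContinuousLinearMap.sub_apply, inner_sub_left, Complex.sub_re] at h0
  linarith

private lemma re_inner_smul (c : ℝ≥0) (T : H →L[ℂ] H) (x : H) :
    (inner ℂ ((c • T) x) x : ℂ).re = (c : ℝ) * (inner ℂ (T x) x : ℂ).re := by
  rw [ContinuousLinearMap.smul_apply, NNReal.smul_def,
    RCLike.real_smul_eq_coe_smul (K := ℂ), inner_smul_left]
  simp [Complex.mul_re]

private lemma re_inner_one (x : H) : (inner ℂ ((1 : H →L[ℂ] H) x) x : ℂ).re = ‖x‖ ^ 2 := by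
  have := inner_self_eq_norm_sq (𝕜 := ℂ) x
  simpa using this

private lemma re_inner_self {H : Type*} [NormedAddCommGroup H] [InnerProductSpace ℂ H] (y : H) :
    (inner ℂ y y : ℂ).re = ‖y‖ ^ 2 := by
  simpa using inner_self_eq_norm_sq (𝕜 := ℂ) y

private lemma inner_eq_re {T : H →L[ℂ] H} (hT : 0 ≤ T) (x : H) :
    (inner ℂ (T x) x : ℂ) = ((inner ℂ (T x) x : ℂ).re : ℂ) := by
  rw [ContinuousLinearMap.nonneg_iff_isPositive] at hT
  exact (((ContinuousLinearMap.isPositive_iff_complex T).mp hT x).1).symm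

private lemma mccarthy_s17 (S : H →L[ℂ] H) (hS : 0 ≤ S) {r : ℝ} (hr : 1 ≤ r)
    (x : H) (hx : ‖x‖ = 1) :
    (inner ℂ (S x) x : ℂ).re ^ r ≤ (inner ℂ ((CFC.rpow S r) x) x : ℂ).re := by
  have ha0 : 0 ≤ (inner ℂ (S x) x : ℂ).re := re_inner_nonneg hS x
  have hb0 : 0 ≤ (inner ℂ ((CFC.rpow S r) x) x : ℂ).re :=
    re_inner_nonneg (CFC.rpow_nonneg) x
  set a := (inner ℂ (S x) x : ℂ).re
  set b := (inner ℂ ((CFC.rpow S r) x) x : ℂ).re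
  rcases eq_or_lt_of_le hr with heq | hlt
  · have : CFC.rpow S r = S := by rw [← heq]; exact CFC.rpow_one S hS
    rw [← heq, Real.rpow_one]
    simp only [a, b, this, le_refl]
  · have hr0 : (0:ℝ) < r := lt_trans one_pos hlt
    have hrne : r ≠ 0 := ne_of_gt hr0
    set q := Real.conjExponent r with hq
    have hpq : r.HolderConjugate q := Real.HolderConjugate.conjExponent hlt
    have hq0 : 0 < q := hpq.symm.pos
    have key : ∀ c : ℝ≥0, (c:ℝ) * a ≤ (c:ℝ)^r / r * b + q⁻¹ := by
      intro c
      have hop : cfc (fun t : ℝ≥0 => c * t) S ≤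
          cfc (fun t : ℝ≥0 => (c ^ r / r.toNNReal) * t ^ r + (q.toNNReal)⁻¹) S := by
        refine cfc_mono (fun t _ => ?_)
          ((continuous_const.mul continuous_id).continuousOn)
          (((continuous_const.mul (NNReal.continuous_rpow_const hr0.le)).add
            continuous_const).continuousOn)
        calc c * t ≤ (c*t)^r / r.toNNReal + 1^q / q.toNNReal := by
              simpa using NNReal.young_inequality_real (c*t) 1 hpq
          _ = (c ^ r / r.toNNReal) * t ^ r + (q.toNNReal)⁻¹ := by
              rw [NNReal.mul_rpow, NNReal.one_rpow]
              rw [div_mul_eq_mul_div, one_div]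
      have hL : cfc (fun t : ℝ≥0 => c * t) S = c • S := cfc_const_mul_id c S hS
      have hR : cfc (fun t : ℝ≥0 => (c ^ r / r.toNNReal) * t ^ r + (q.toNNReal)⁻¹) S
          = (c ^ r / r.toNNReal) • (CFC.rpow S r) + (q.toNNReal)⁻¹ • 1 := by
        rw [cfc_add (a := S) (fun t : ℝ≥0 => (c ^ r / r.toNNReal) * t ^ r) (fun _ => (q.toNNReal)⁻¹)
          ((continuous_const.mul (NNReal.continuous_rpow_const hr0.le)).continuousOn)
          (continuous_const.continuousOn),
          cfc_const_mul _ _ S ((NNReal.continuous_rpow_const hr0.le).continuousOn),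
          cfc_const _ S, Algebra.algebraMap_eq_smul_one]
        rfl
      rw [hL, hR] at hop
      have hmono := re_inner_mono hop x
      rw [re_inner_smul] at hmono
      have hrhs : (inner ℂ (((c ^ r / r.toNNReal) • (CFC.rpow S r)
            + (q.toNNReal)⁻¹ • (1 : H →L[ℂ] H)) x) x : ℂ).re
          = ((c ^ r / r.toNNReal : ℝ≥0) : ℝ) * b + ((q.toNNReal⁻¹ : ℝ≥0) : ℝ) := by
        rw [ContinuousLinearMap.add_apply, inner_add_left, Complex.add_re,
          re_inner_smul, re_inner_smul, re_inner_one, hx]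
        ring
      rw [hrhs] at hmono
      have hc1 : ((c ^ r / r.toNNReal : ℝ≥0) : ℝ) = (c:ℝ)^r / r := by
        rw [NNReal.coe_div, NNReal.coe_rpow, Real.coe_toNNReal _ hr0.le]
      have hc2 : ((q.toNNReal⁻¹ : ℝ≥0) : ℝ) = q⁻¹ := by
        rw [NNReal.coe_inv, Real.coe_toNNReal _ hq0.le]
      rw [hc1, hc2] at hmono
      exact hmono
    rcases eq_or_lt_of_le hb0 with hb | hb
    · have haz : a = 0 := by
        by_contra h
        have hapos : 0 < a := lt_of_le_of_ne ha0 (Ne.symm h)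
        have hk := key ((q⁻¹ + 1)/a).toNNReal
        rw [Real.coe_toNNReal _ (by positivity), ← hb, mul_zero] at hk
        rw [div_mul_cancel₀ _ hapos.ne'] at hk
        linarith
      rw [haz, Real.zero_rpow hrne, ← hb]
    · have h1 := key (b ^ (-r⁻¹)).toNNReal
      have hc0pos : (0:ℝ) < b ^ (-r⁻¹) := Real.rpow_pos_of_pos hb _
      rw [Real.coe_toNNReal _ hc0pos.le] at h1
      have hcr : (b ^ (-r⁻¹)) ^ r = b⁻¹ := by
        rw [← Real.rpow_mul hb0, show -r⁻¹ * r = -1 by field_simp]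
        exact Real.rpow_neg_one b
      rw [hcr] at h1
      have h2 : b⁻¹ / r * b = r⁻¹ := by field_simp
      rw [h2] at h1
      have h3 : b ^ (-r⁻¹) * a ≤ 1 := by
        calc b ^ (-r⁻¹) * a ≤ r⁻¹ + q⁻¹ := h1
          _ = 1 := hpq.inv_add_inv_eq_one
      have hbp : (0:ℝ) < b ^ r⁻¹ := Real.rpow_pos_of_pos hb _
      have h4 : a ≤ b ^ r⁻¹ := by
        have hneg : b ^ (-r⁻¹) = (b ^ r⁻¹)⁻¹ := Real.rpow_neg hb0 _
        rw [hneg] at h3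
        calc a = (b ^ r⁻¹) * ((b ^ r⁻¹)⁻¹ * a) := by
              field_simp
          _ ≤ (b ^ r⁻¹) * 1 := mul_le_mul_of_nonneg_left h3 hbp.le
          _ = b ^ r⁻¹ := mul_one _
      calc a ^ r ≤ (b ^ r⁻¹) ^ r := Real.rpow_le_rpow ha0 h4 hr0.le
        _ = b := Real.rpow_inv_rpow hb0 hrne

end Helpers

theorem berezin_adjoint_mul_power
    {H : Type*} [NormedAddCommGroup H] [InnerProductSpace ℂ H] [CompleteSpace H]
    {Ω : Type*} [Nonempty Ω] (k : Ω → H) (hk : ∀ lam, ‖k lam‖ = 1)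
    (A B : H →L[ℂ] H) (r : ℝ) (hr : 1 ≤ r) :
    ber k (adjoint A * B) ^ r ≤
      (1 / Real.sqrt 2)
        * ber k (CFC.rpow (opAbs B) (2 * r) + Complex.I • CFC.rpow (opAbs A) (2 * r)) := by
  have hr0 : (0:ℝ) < r := lt_of_lt_of_le one_pos hr
  have hrne : r ≠ 0 := ne_of_gt hr0
  set T := adjoint A * B with hT
  set P := CFC.rpow (opAbs B) (2 * r) with hPd
  set Q := CFC.rpow (opAbs A) (2 * r) with hQd
  have hP : (0:H→L[ℂ]H) ≤ P := CFC.rpow_nonneg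
  have hQ : (0:H→L[ℂ]H) ≤ Q := CFC.rpow_nonneg
  have hBB : (0:H→L[ℂ]H) ≤ adjoint B * B := by
    rw [ContinuousLinearMap.nonneg_iff_isPositive]
    exact ContinuousLinearMap.isPositive_adjoint_comp_self B
  have hAA : (0:H→L[ℂ]H) ≤ adjoint A * A := by
    rw [ContinuousLinearMap.nonneg_iff_isPositive]
    exact ContinuousLinearMap.isPositive_adjoint_comp_self A
  have hPdef : P = CFC.rpow (adjoint B * B) r := by
    have h2r : (((2*r).toNNReal : ℝ≥0) : ℝ) = 2*r := Real.coe_toNNReal _ (by positivity)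
    have h := CFC.rpow_sqrt_nnreal (A := H →L[ℂ] H) (a := adjoint B * B)
      (x := (2*r).toNNReal) hBB
    rw [h2r] at h
    rw [hPd]
    simpa [opAbs, show 2*r/2 = r by ring] using h
  have hQdef : Q = CFC.rpow (adjoint A * A) r := by
    have h2r : (((2*r).toNNReal : ℝ≥0) : ℝ) = 2*r := Real.coe_toNNReal _ (by positivity)
    have h := CFC.rpow_sqrt_nnreal (A := H →L[ℂ] H) (a := adjoint A * A)
      (x := (2*r).toNNReal) hAA
    rw [h2r] at h
    rw [hQd]
    simpa [opAbs, show 2*r/2 = r by ring] using h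
  have hbdd : ∀ T' : H →L[ℂ] H,
      BddAbove (Set.range fun lam => ‖(inner ℂ (T' (k lam)) (k lam) : ℂ)‖) := by
    intro T'
    refine ⟨‖T'‖, ?_⟩
    rintro y ⟨lam, rfl⟩
    calc ‖(inner ℂ (T' (k lam)) (k lam) : ℂ)‖ ≤ ‖T' (k lam)‖ * ‖k lam‖ := norm_inner_le_norm _ _
      _ ≤ (‖T'‖ * ‖k lam‖) * ‖k lam‖ := by
          gcongr
          exact T'.le_opNorm _
      _ = ‖T'‖ := by rw [hk]; ring
  have hber_nonneg : ∀ T' : H →L[ℂ] H, 0 ≤ ber k T' := by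
    intro T'
    obtain ⟨lam⟩ := ‹Nonempty Ω›
    exact le_trans (norm_nonneg _) (le_ciSup (hbdd T') lam)
  have key : ∀ lam, ‖(inner ℂ (T (k lam)) (k lam) : ℂ)‖ ^ r ≤
      (1 / Real.sqrt 2) * ‖(inner ℂ ((P + Complex.I • Q) (k lam)) (k lam) : ℂ)‖ := by
    intro lam
    set x := k lam with hxd
    have hx : ‖x‖ = 1 := hk lam
    set aa := (inner ℂ (P x) x : ℂ).re with haa
    set bb := (inner ℂ (Q x) x : ℂ).re with hbb
    have haa0 : 0 ≤ aa := re_inner_nonneg hP x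
    have hbb0 : 0 ≤ bb := re_inner_nonneg hQ x
    have hCS : ‖(inner ℂ (T x) x : ℂ)‖ ≤ ‖B x‖ * ‖A x‖ := by
      have h1 : (inner ℂ (T x) x : ℂ) = inner ℂ (B x) (A x) := by
        rw [hT, ContinuousLinearMap.mul_apply, ContinuousLinearMap.adjoint_inner_left]
      rw [h1]
      exact norm_inner_le_norm _ _
    have hmB : ‖B x‖ ^ (2*r) ≤ aa := by
      have h1 : (inner ℂ ((adjoint B * B) x) x : ℂ).re = ‖B x‖ ^ 2 := by
        rw [ContinuousLinearMap.mul_apply, ContinuousLinearMap.adjoint_inner_left]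
        exact re_inner_self (B x)
      have h2 := mccarthy_s17 (adjoint B * B) hBB hr x hx
      rw [h1, ← hPdef] at h2
      calc ‖B x‖ ^ (2*r) = ((‖B x‖ : ℝ) ^ (2:ℕ)) ^ r := by
            rw [← Real.rpow_natCast ‖B x‖ 2, ← Real.rpow_mul (norm_nonneg _)]
            norm_num
        _ ≤ aa := h2
    have hmA : ‖A x‖ ^ (2*r) ≤ bb := by
      have h1 : (inner ℂ ((adjoint A * A) x) x : ℂ).re = ‖A x‖ ^ 2 := by
        rw [ContinuousLinearMap.mul_apply, ContinuousLinearMap.adjoint_inner_left]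
        exact re_inner_self (A x)
      have h2 := mccarthy_s17 (adjoint A * A) hAA hr x hx
      rw [h1, ← hQdef] at h2
      calc ‖A x‖ ^ (2*r) = ((‖A x‖ : ℝ) ^ (2:ℕ)) ^ r := by
            rw [← Real.rpow_natCast ‖A x‖ 2, ← Real.rpow_mul (norm_nonneg _)]
            norm_num
        _ ≤ bb := h2
    have hrB : ‖B x‖ ^ r ≤ Real.sqrt aa := by
      have h3 := Real.rpow_le_rpow (by positivity) hmB (by norm_num : (0:ℝ) ≤ 2⁻¹)
      rw [← Real.rpow_mul (norm_nonneg _), show 2*r*2⁻¹ = r by ring] at h3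
      rw [Real.sqrt_eq_rpow, one_div]
      exact h3
    have hrA : ‖A x‖ ^ r ≤ Real.sqrt bb := by
      have h3 := Real.rpow_le_rpow (by positivity) hmA (by norm_num : (0:ℝ) ≤ 2⁻¹)
      rw [← Real.rpow_mul (norm_nonneg _), show 2*r*2⁻¹ = r by ring] at h3
      rw [Real.sqrt_eq_rpow, one_div]
      exact h3
    have hfr : ‖(inner ℂ (T x) x : ℂ)‖ ^ r ≤ Real.sqrt aa * Real.sqrt bb := by
      calc ‖(inner ℂ (T x) x : ℂ)‖ ^ r ≤ (‖B x‖ * ‖A x‖) ^ r :=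
            Real.rpow_le_rpow (norm_nonneg _) hCS hr0.le
        _ = ‖B x‖ ^ r * ‖A x‖ ^ r := Real.mul_rpow (norm_nonneg _) (norm_nonneg _)
        _ ≤ Real.sqrt aa * Real.sqrt bb :=
            mul_le_mul hrB hrA (by positivity) (Real.sqrt_nonneg _)
    have hgval : ‖(inner ℂ ((P + Complex.I • Q) x) x : ℂ)‖ = Real.sqrt (aa^2 + bb^2) := by
      have hPre : (inner ℂ (P x) x : ℂ) = ((aa : ℝ) : ℂ) := inner_eq_re hP x
      have hQre : (inner ℂ (Q x) x : ℂ) = ((bb : ℝ) : ℂ) := inner_eq_re hQ x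
      have hval : (inner ℂ ((P + Complex.I • Q) x) x : ℂ)
          = ((aa : ℝ) : ℂ) - Complex.I * ((bb : ℝ) : ℂ) := by
        rw [ContinuousLinearMap.add_apply, inner_add_left, ContinuousLinearMap.smul_apply,
          inner_smul_left, hPre, hQre]
        simp [Complex.ext_iff]
      rw [hval]
      rw [Complex.norm_def, Complex.normSq_apply]
      congr 1
      simp [Complex.ext_iff]
      ring
    have hsc : Real.sqrt aa * Real.sqrt bb ≤ (1/Real.sqrt 2) * Real.sqrt (aa^2+bb^2) := by
      rw [← Real.sqrt_mul haa0, one_div, ← Real.sqrt_inv, ← Real.sqrt_mul (by positivity)]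
      apply Real.sqrt_le_sqrt
      nlinarith [sq_nonneg (aa - bb)]
    calc ‖(inner ℂ (T x) x : ℂ)‖ ^ r ≤ Real.sqrt aa * Real.sqrt bb := hfr
      _ ≤ (1/Real.sqrt 2) * Real.sqrt (aa^2+bb^2) := hsc
      _ = (1/Real.sqrt 2) * ‖(inner ℂ ((P + Complex.I • Q) x) x : ℂ)‖ := by rw [hgval]
  have hsqrt2 : (0:ℝ) < 1 / Real.sqrt 2 := by positivity
  have hRhs0 : 0 ≤ (1 / Real.sqrt 2) * ber k (P + Complex.I • Q) :=
    mul_nonneg hsqrt2.le (hber_nonneg _)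
  have hkey2 : ∀ lam, ‖(inner ℂ (T (k lam)) (k lam) : ℂ)‖ ^ r ≤
      (1 / Real.sqrt 2) * ber k (P + Complex.I • Q) := by
    intro lam
    refine le_trans (key lam) (mul_le_mul_of_nonneg_left ?_ hsqrt2.le)
    exact le_ciSup (hbdd _) lam
  have hber_le : ber k T ≤ ((1 / Real.sqrt 2) * ber k (P + Complex.I • Q)) ^ r⁻¹ := by
    refine ciSup_le fun lam => ?_
    calc ‖(inner ℂ (T (k lam)) (k lam) : ℂ)‖
        = (‖(inner ℂ (T (k lam)) (k lam) : ℂ)‖ ^ r) ^ r⁻¹ :=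
          (Real.rpow_rpow_inv (norm_nonneg _) hrne).symm
      _ ≤ ((1 / Real.sqrt 2) * ber k (P + Complex.I • Q)) ^ r⁻¹ :=
          Real.rpow_le_rpow (by positivity) (hkey2 lam) (by positivity)
  calc ber k T ^ r ≤ (((1 / Real.sqrt 2) * ber k (P + Complex.I • Q)) ^ r⁻¹) ^ r :=
        Real.rpow_le_rpow (hber_nonneg _) hber_le hr0.le
    _ = (1 / Real.sqrt 2) * ber k (P + Complex.I • Q) := Real.rpow_inv_rpow hRhs0 hrne
end

section
/- Let A be a bounded linear operator on H. Then ber(Re(A))² + ber(Im(A))² + c(Re(A))² + c(Im(A))² ≤ 2·ber(A)² ≤ 2·‖A‖_ber². -/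
set_option synthInstance.maxHeartbeats 1000000
set_option maxHeartbeats 1000000
set_option maxRecDepth 8000

open scoped NNReal
open ContinuousLinearMap

/-- The Berezin norm of an operator. -/
noncomputable def berNorm {H : Type*} [NormedAddCommGroup H] [InnerProductSpace ℂ H]
    {Ω : Type*} (k : Ω → H) (T : H →L[ℂ] H) : ℝ :=
  ⨆ p : Ω × Ω, ‖(inner ℂ (T (k p.1)) (k p.2) : ℂ)‖

/-- The quantity `c(T) = inf_λ |⟨T k̂_λ, k̂_λ⟩|`. -/
noncomputable def cber {H : Type*} [NormedAddCommGroup H] [InnerProductSpace ℂ H]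
    {Ω : Type*} (k : Ω → H) (T : H →L[ℂ] H) : ℝ :=
  ⨅ lam : Ω, ‖(inner ℂ (T (k lam)) (k lam) : ℂ)‖

lemma re_part_inner {H : Type*} [NormedAddCommGroup H] [InnerProductSpace ℂ H]
    [CompleteSpace H] (A : H →L[ℂ] H) (x : H) :
    (inner ℂ (((2 : ℝ)⁻¹ • (A + adjoint A)) x) x : ℂ) = ((inner ℂ (A x) x : ℂ).re : ℂ) := by
  rw [ContinuousLinearMap.smul_apply, ContinuousLinearMap.add_apply,
    RCLike.real_smul_eq_coe_smul (K := ℂ),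
    inner_smul_left, inner_add_left, adjoint_inner_left, ← inner_conj_symm x (A x)]
  set a : ℂ := inner ℂ (A x) x
  rw [Complex.ext_iff]
  simp
  ring

lemma im_part_inner {H : Type*} [NormedAddCommGroup H] [InnerProductSpace ℂ H]
    [CompleteSpace H] (A : H →L[ℂ] H) (x : H) :
    (inner ℂ ((((2 * Complex.I)⁻¹ : ℂ) • (A - adjoint A)) x) x : ℂ)
      = -(((inner ℂ (A x) x : ℂ).im : ℂ)) := by
  rw [ContinuousLinearMap.smul_apply, ContinuousLinearMap.sub_apply,
    inner_smul_left, inner_sub_left, adjoint_inner_left, ← inner_conj_symm x (A x)]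
  set a : ℂ := inner ℂ (A x) x
  rw [Complex.ext_iff]
  simp [Complex.div_re, Complex.div_im, Complex.normSq]
  ring

lemma bdd_diag {H : Type*} [NormedAddCommGroup H] [InnerProductSpace ℂ H]
    {Ω : Type*} (k : Ω → H) (hk : ∀ lam, ‖k lam‖ = 1) (T : H →L[ℂ] H) :
    BddAbove (Set.range fun lam : Ω => ‖(inner ℂ (T (k lam)) (k lam) : ℂ)‖) := by
  refine ⟨‖T‖, ?_⟩
  rintro r ⟨lam, rfl⟩
  calc ‖(inner ℂ (T (k lam)) (k lam) : ℂ)‖ ≤ ‖T (k lam)‖ * ‖k lam‖ := norm_inner_le_norm _ _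
    _ ≤ ‖T‖ * ‖k lam‖ * ‖k lam‖ := by
        gcongr; exact T.le_opNorm _
    _ = ‖T‖ := by rw [hk]; ring

theorem berezin_cartesian_decomposition_bound
    {H : Type*} [NormedAddCommGroup H] [InnerProductSpace ℂ H] [CompleteSpace H]
    {Ω : Type*} [Nonempty Ω] (k : Ω → H) (hk : ∀ lam, ‖k lam‖ = 1)
    (A : H →L[ℂ] H) :
    ber k ((2 : ℝ)⁻¹ • (A + adjoint A)) ^ 2
        + ber k (((2 * Complex.I)⁻¹ : ℂ) • (A - adjoint A)) ^ 2
        + cber k ((2 : ℝ)⁻¹ • (A + adjoint A)) ^ 2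
        + cber k (((2 * Complex.I)⁻¹ : ℂ) • (A - adjoint A)) ^ 2
      ≤ 2 * ber k A ^ 2 ∧
    2 * ber k A ^ 2 ≤ 2 * berNorm k A ^ 2 := by
  classical
  set a : Ω → ℂ := fun lam => inner ℂ (A (k lam)) (k lam) with ha
  -- rewrite the Re/Im Berezin quantities
  have hre : ∀ lam : Ω,
      ‖(inner ℂ (((2 : ℝ)⁻¹ • (A + adjoint A)) (k lam)) (k lam) : ℂ)‖ = |(a lam).re| := by
    intro lam
    rw [re_part_inner, Complex.norm_real, Real.norm_eq_abs]
  have him : ∀ lam : Ω,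
      ‖(inner ℂ ((((2 * Complex.I)⁻¹ : ℂ) • (A - adjoint A)) (k lam)) (k lam) : ℂ)‖
        = |(a lam).im| := by
    intro lam
    rw [im_part_inner, norm_neg, Complex.norm_real, Real.norm_eq_abs]
  have hbddA := bdd_diag k hk A
  have hbddR := bdd_diag k hk ((2 : ℝ)⁻¹ • (A + adjoint A))
  have hbddI := bdd_diag k hk (((2 * Complex.I)⁻¹ : ℂ) • (A - adjoint A))
  set R := ber k ((2 : ℝ)⁻¹ • (A + adjoint A)) with hR
  set I := ber k (((2 * Complex.I)⁻¹ : ℂ) • (A - adjoint A)) with hI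
  set cR := cber k ((2 : ℝ)⁻¹ • (A + adjoint A)) with hcR
  set cI := cber k (((2 * Complex.I)⁻¹ : ℂ) • (A - adjoint A)) with hcI
  set b := ber k A with hb
  -- b bounds ‖a lam‖
  have hab : ∀ lam : Ω, ‖a lam‖ ≤ b := fun lam => le_ciSup hbddA lam
  obtain ⟨lam0⟩ := ‹Nonempty Ω›
  have hb0 : (0:ℝ) ≤ b := le_trans (norm_nonneg _) (hab lam0)
  -- cR, cI lower bounds
  have hcR0 : (0:ℝ) ≤ cR := le_ciInf fun lam => norm_nonneg _
  have hcI0 : (0:ℝ) ≤ cI := le_ciInf fun lam => norm_nonneg _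
  have hcRle : ∀ lam : Ω, cR ≤ |(a lam).re| := by
    intro lam
    rw [← hre lam]
    exact ciInf_le ⟨0, fun r ⟨l, hl⟩ => hl ▸ norm_nonneg _⟩ lam
  have hcIle : ∀ lam : Ω, cI ≤ |(a lam).im| := by
    intro lam
    rw [← him lam]
    exact ciInf_le ⟨0, fun r ⟨l, hl⟩ => hl ▸ norm_nonneg _⟩ lam
  have hnormsq : ∀ lam : Ω, (a lam).re ^ 2 + (a lam).im ^ 2 = ‖a lam‖ ^ 2 := by
    intro lam
    rw [Complex.sq_norm, Complex.normSq_apply]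
    ring
  have himle : ∀ lam : Ω, |(a lam).im| ≤ ‖a lam‖ := fun lam => by
    exact Complex.abs_im_le_norm _
  have hrele : ∀ lam : Ω, |(a lam).re| ≤ ‖a lam‖ := fun lam => by
    exact Complex.abs_re_le_norm _
  -- key pointwise bound: |re|² + cI² ≤ b², etc.
  have key1 : R ^ 2 + cI ^ 2 ≤ b ^ 2 := by
    have hs : ∀ lam : Ω, |(a lam).re| ≤ Real.sqrt (b ^ 2 - cI ^ 2) := by
      intro lam
      have h1 : |(a lam).re| ^ 2 + cI ^ 2 ≤ b ^ 2 := by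
        have := hcIle lam
        have h2 := hab lam
        have := hnormsq lam
        nlinarith [abs_nonneg (a lam).im, abs_nonneg (a lam).re, sq_abs (a lam).re,
          sq_abs (a lam).im, norm_nonneg (a lam)]
      have := Real.sqrt_le_sqrt (show |(a lam).re| ^ 2 ≤ b ^ 2 - cI ^ 2 by linarith)
      rwa [Real.sqrt_sq (abs_nonneg _)] at this
    have hRle : R ≤ Real.sqrt (b ^ 2 - cI ^ 2) := by
      rw [hR, ber]
      exact ciSup_le fun lam => (hre lam) ▸ hs lam
    have hR0 : (0:ℝ) ≤ R := by
      have := le_ciSup hbddR lam0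
      exact le_trans (norm_nonneg _) this
    have := sq_le_sq' (by linarith [Real.sqrt_nonneg (b ^ 2 - cI ^ 2)]) hRle
    have hsq : Real.sqrt (b ^ 2 - cI ^ 2) ^ 2 = b ^ 2 - cI ^ 2 := by
      rw [Real.sq_sqrt]
      nlinarith [hcIle lam0, hab lam0, himle lam0, norm_nonneg (a lam0)]
    nlinarith
  have key2 : I ^ 2 + cR ^ 2 ≤ b ^ 2 := by
    have hs : ∀ lam : Ω, |(a lam).im| ≤ Real.sqrt (b ^ 2 - cR ^ 2) := by
      intro lam
      have h1 : |(a lam).im| ^ 2 + cR ^ 2 ≤ b ^ 2 := by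
        have := hcRle lam
        have h2 := hab lam
        have := hnormsq lam
        nlinarith [abs_nonneg (a lam).im, abs_nonneg (a lam).re, sq_abs (a lam).re,
          sq_abs (a lam).im, norm_nonneg (a lam)]
      have := Real.sqrt_le_sqrt (show |(a lam).im| ^ 2 ≤ b ^ 2 - cR ^ 2 by linarith)
      rwa [Real.sqrt_sq (abs_nonneg _)] at this
    have hIle : I ≤ Real.sqrt (b ^ 2 - cR ^ 2) := by
      rw [hI, ber]
      exact ciSup_le fun lam => (him lam) ▸ hs lam
    have hI0 : (0:ℝ) ≤ I := by
      have := le_ciSup hbddI lam0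
      exact le_trans (norm_nonneg _) this
    have := sq_le_sq' (by linarith [Real.sqrt_nonneg (b ^ 2 - cR ^ 2)]) hIle
    have hsq : Real.sqrt (b ^ 2 - cR ^ 2) ^ 2 = b ^ 2 - cR ^ 2 := by
      rw [Real.sq_sqrt]
      nlinarith [hcRle lam0, hab lam0, hrele lam0, norm_nonneg (a lam0)]
    nlinarith
  constructor
  · linarith
  · -- ber ≤ berNorm
    have hbddBN : BddAbove (Set.range fun p : Ω × Ω => ‖(inner ℂ (A (k p.1)) (k p.2) : ℂ)‖) := by
      refine ⟨‖A‖, ?_⟩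
      rintro r ⟨⟨l1, l2⟩, rfl⟩
      calc ‖(inner ℂ (A (k l1)) (k l2) : ℂ)‖ ≤ ‖A (k l1)‖ * ‖k l2‖ := norm_inner_le_norm _ _
        _ ≤ ‖A‖ * ‖k l1‖ * ‖k l2‖ := by gcongr; exact A.le_opNorm _
        _ = ‖A‖ := by rw [hk, hk]; ring
    have hle : b ≤ berNorm k A := by
      rw [hb, ber]
      refine ciSup_le fun lam => ?_
      exact le_ciSup hbddBN (lam, lam)
    have hbn0 : (0:ℝ) ≤ berNorm k A := le_trans hb0 hle
    nlinarith
end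

section
/- Let A, B be bounded linear operators on H. Then ‖A + B‖_ber² ≤ ‖A‖_ber² + ‖B‖_ber² + ber(A*A)^{1/2}·ber(B*B)^{1/2} + ber(A*B); moreover ‖A + B‖_ber² ≤ ‖A‖_ber² + ‖B‖_ber² + (1/2)·ber(A*A + B*B) + ber(A*B), and ‖A + B‖_ber² ≤ ‖A‖_ber² + ‖B‖_ber² + (1/2)·ber(AA* + BB*) + ber(AB*). -/
set_option synthInstance.maxHeartbeats 1000000
set_option maxHeartbeats 1000000

open scoped NNReal
open ContinuousLinearMap

section Aux

variable {H : Type*} [NormedAddCommGroup H] [InnerProductSpace ℂ H]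
variable {Ω : Type*} (k : Ω → H)

theorem buzano' (u v e : H) (he : ‖e‖ = 1) :
    ‖(inner ℂ u e : ℂ) * inner ℂ e v‖ ≤ (‖u‖ * ‖v‖ + ‖(inner ℂ u v : ℂ)‖) / 2 := by
  set c : ℂ := inner ℂ e v with hc
  have hw : ‖(2 * c) • e - v‖ = ‖v‖ := by
    have h1 : ‖(2 * c) • e - v‖ ^ 2 = ‖v‖ ^ 2 := by
      rw [@norm_sub_sq ℂ]
      have h2 : (inner ℂ ((2 * c) • e) v : ℂ) = (starRingEnd ℂ) (2 * c) * c := by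
        rw [inner_smul_left, ← hc]
      have h3 : RCLike.re ((inner ℂ ((2 * c) • e) v : ℂ)) = 2 * ‖c‖ ^ 2 := by
        have h4 : (starRingEnd ℂ) (2 * c) = 2 * (starRingEnd ℂ) c := by
          rw [map_mul, map_ofNat]
        rw [h2, h4, mul_assoc, RCLike.conj_mul]
        simp [← RCLike.ofReal_pow, ← Complex.ofReal_pow]
      rw [h3, norm_smul, he]
      have : ‖(2 : ℂ) * c‖ = 2 * ‖c‖ := by rw [norm_mul]; norm_num
      rw [this]; ring
    calc ‖(2 * c) • e - v‖ = Real.sqrt (‖(2 * c) • e - v‖ ^ 2) :=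
          (Real.sqrt_sq (norm_nonneg _)).symm
      _ = Real.sqrt (‖v‖ ^ 2) := by rw [h1]
      _ = ‖v‖ := Real.sqrt_sq (norm_nonneg _)
  have key : 2 * ((inner ℂ u e : ℂ) * inner ℂ e v) = inner ℂ u v + inner ℂ u ((2 * c) • e - v) := by
    rw [inner_sub_right, inner_smul_right, ← hc]; ring
  have hnorm : ‖2 * ((inner ℂ u e : ℂ) * inner ℂ e v)‖ ≤ ‖(inner ℂ u v : ℂ)‖ + ‖u‖ * ‖v‖ := by
    rw [key]
    calc ‖(inner ℂ u v : ℂ) + inner ℂ u ((2 * c) • e - v)‖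
        ≤ ‖(inner ℂ u v : ℂ)‖ + ‖(inner ℂ u ((2 * c) • e - v) : ℂ)‖ := norm_add_le _ _
      _ ≤ ‖(inner ℂ u v : ℂ)‖ + ‖u‖ * ‖(2 * c) • e - v‖ := by
          gcongr; exact norm_inner_le_norm _ _
      _ = ‖(inner ℂ u v : ℂ)‖ + ‖u‖ * ‖v‖ := by rw [hw]
  rw [norm_mul] at hnorm
  have h2 : ‖(2 : ℂ)‖ = 2 := by norm_num
  rw [h2] at hnorm
  linarith

variable (hk : ∀ lam, ‖k lam‖ = 1)
include hk

theorem le_berNorm' (T : H →L[ℂ] H) (lam mu : Ω) :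
    ‖(inner ℂ (T (k lam)) (k mu) : ℂ)‖ ≤ berNorm k T := by
  have hb : BddAbove (Set.range fun p : Ω × Ω => ‖(inner ℂ (T (k p.1)) (k p.2) : ℂ)‖) := by
    refine ⟨‖T‖, ?_⟩
    rintro r ⟨p, rfl⟩
    calc ‖(inner ℂ (T (k p.1)) (k p.2) : ℂ)‖ ≤ ‖T (k p.1)‖ * ‖k p.2‖ := norm_inner_le_norm _ _
      _ ≤ ‖T‖ * ‖k p.1‖ * ‖k p.2‖ := by gcongr; exact le_opNorm T _
      _ = ‖T‖ := by rw [hk, hk]; ring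
  exact le_ciSup hb (lam, mu)

theorem le_ber' (T : H →L[ℂ] H) (lam : Ω) :
    ‖(inner ℂ (T (k lam)) (k lam) : ℂ)‖ ≤ ber k T := by
  have hb : BddAbove (Set.range fun l : Ω => ‖(inner ℂ (T (k l)) (k l) : ℂ)‖) := by
    refine ⟨‖T‖, ?_⟩
    rintro r ⟨l, rfl⟩
    calc ‖(inner ℂ (T (k l)) (k l) : ℂ)‖ ≤ ‖T (k l)‖ * ‖k l‖ := norm_inner_le_norm _ _
      _ ≤ ‖T‖ * ‖k l‖ * ‖k l‖ := by gcongr; exact le_opNorm T _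
      _ = ‖T‖ := by rw [hk]; ring
  exact le_ciSup hb lam

variable [Nonempty Ω]

theorem berNorm_nonneg' (T : H →L[ℂ] H) : 0 ≤ berNorm k T :=
  le_trans (norm_nonneg _) (le_berNorm' k hk T (Classical.arbitrary Ω) (Classical.arbitrary Ω))

theorem ber_nonneg' (T : H →L[ℂ] H) : 0 ≤ ber k T :=
  le_trans (norm_nonneg _) (le_ber' k hk T (Classical.arbitrary Ω))

theorem berNorm_adjoint' [CompleteSpace H] (T : H →L[ℂ] H) :
    berNorm k (adjoint T) = berNorm k T := by
  have key : ∀ S : H →L[ℂ] H, berNorm k (adjoint S) ≤ berNorm k S := by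
    intro S
    apply ciSup_le
    rintro ⟨lam, mu⟩
    have : ‖(inner ℂ ((adjoint S) (k lam)) (k mu) : ℂ)‖ = ‖(inner ℂ (S (k mu)) (k lam) : ℂ)‖ := by
      rw [adjoint_inner_left, norm_inner_symm]
    rw [this]
    exact le_berNorm' k hk S mu lam
  refine le_antisymm (key T) ?_
  have := key (adjoint T)
  rwa [adjoint_adjoint] at this

theorem berNorm_sq_le' (T : H →L[ℂ] H) (R : ℝ) (hR : 0 ≤ R)
    (h : ∀ lam mu, ‖(inner ℂ (T (k lam)) (k mu) : ℂ)‖ ^ 2 ≤ R) :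
    berNorm k T ^ 2 ≤ R := by
  have h1 : berNorm k T ≤ Real.sqrt R := by
    apply ciSup_le
    rintro ⟨lam, mu⟩
    exact Real.le_sqrt_of_sq_le (h lam mu)
  calc berNorm k T ^ 2 ≤ Real.sqrt R ^ 2 := by
        gcongr
        exact berNorm_nonneg' k hk T
    _ = R := Real.sq_sqrt hR

theorem core' [CompleteSpace H] (A B : H →L[ℂ] H) (lam mu : Ω) :
    ‖(inner ℂ ((A + B) (k lam)) (k mu) : ℂ)‖ ^ 2 ≤
      berNorm k A ^ 2 + berNorm k B ^ 2 + ‖A (k lam)‖ * ‖B (k lam)‖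
        + ber k (adjoint A * B) := by
  set x := k lam with hx
  set y := k mu with hy
  set a := ‖(inner ℂ (A x) y : ℂ)‖ with ha'
  set b := ‖(inner ℂ (B x) y : ℂ)‖ with hb'
  have step1 : ‖(inner ℂ ((A + B) x) y : ℂ)‖ ≤ a + b := by
    rw [add_apply, inner_add_left]
    exact norm_add_le _ _
  have ha : a ≤ berNorm k A := le_berNorm' k hk A lam mu
  have hb : b ≤ berNorm k B := le_berNorm' k hk B lam mu
  have hbuz : a * b ≤ (‖A x‖ * ‖B x‖ + ‖(inner ℂ (A x) (B x) : ℂ)‖) / 2 := by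
    have := buzano' (A x) (B x) y (by rw [hy, hk])
    rw [norm_mul] at this
    have hsym : ‖(inner ℂ y (B x) : ℂ)‖ = b := norm_inner_symm _ _
    rwa [hsym] at this
  have hAB : ‖(inner ℂ (A x) (B x) : ℂ)‖ ≤ ber k (adjoint A * B) := by
    have h1 : (inner ℂ (((adjoint A * B)) x) x : ℂ) = inner ℂ (B x) (A x) := by
      rw [ContinuousLinearMap.mul_apply, adjoint_inner_left]
    have h2 : ‖(inner ℂ (B x) (A x) : ℂ)‖ = ‖(inner ℂ (A x) (B x) : ℂ)‖ :=
      norm_inner_symm _ _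
    have := le_ber' k hk (adjoint A * B) lam
    rw [← hx, h1, h2] at this
    exact this
  have h0a : (0:ℝ) ≤ a := norm_nonneg _
  have h0b : (0:ℝ) ≤ b := norm_nonneg _
  have hsq : ‖(inner ℂ ((A + B) x) y : ℂ)‖ ^ 2 ≤ (a + b) ^ 2 := by
    gcongr
  have ha2 : a ^ 2 ≤ berNorm k A ^ 2 := by gcongr
  have hb2 : b ^ 2 ≤ berNorm k B ^ 2 := by gcongr
  nlinarith [hsq, ha2, hb2, hbuz, hAB]

theorem normAx_le [CompleteSpace H] (A : H →L[ℂ] H) (lam : Ω) :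
    ‖A (k lam)‖ ^ 2 ≤ ber k (adjoint A * A) := by
  have h1 : (inner ℂ (((adjoint A * A)) (k lam)) (k lam) : ℂ) = inner ℂ (A (k lam)) (A (k lam)) := by
    rw [ContinuousLinearMap.mul_apply, adjoint_inner_left]
  have h2 := le_ber' k hk (adjoint A * A) lam
  calc ‖A (k lam)‖ ^ 2 = RCLike.re (inner ℂ ((adjoint A * A) (k lam)) (k lam) : ℂ) := by
        rw [h1, inner_self_eq_norm_sq]
    _ ≤ ‖(inner ℂ ((adjoint A * A) (k lam)) (k lam) : ℂ)‖ := RCLike.re_le_norm _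
    _ ≤ ber k (adjoint A * A) := h2

end Aux

theorem berNorm_add_sq_inequalities
    {H : Type*} [NormedAddCommGroup H] [InnerProductSpace ℂ H] [CompleteSpace H]
    {Ω : Type*} [Nonempty Ω] (k : Ω → H) (hk : ∀ lam, ‖k lam‖ = 1)
    (A B : H →L[ℂ] H) :
    berNorm k (A + B) ^ 2 ≤
        berNorm k A ^ 2 + berNorm k B ^ 2
          + Real.sqrt (ber k (adjoint A * A)) * Real.sqrt (ber k (adjoint B * B))
          + ber k (adjoint A * B) ∧
      berNorm k (A + B) ^ 2 ≤
        berNorm k A ^ 2 + berNorm k B ^ 2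
          + (1 / 2 : ℝ) * ber k (adjoint A * A + adjoint B * B)
          + ber k (adjoint A * B) ∧
      berNorm k (A + B) ^ 2 ≤
        berNorm k A ^ 2 + berNorm k B ^ 2
          + (1 / 2 : ℝ) * ber k (A * adjoint A + B * adjoint B)
          + ber k (A * adjoint B) := by
  have main2 : ∀ A B : H →L[ℂ] H, berNorm k (A + B) ^ 2 ≤
      berNorm k A ^ 2 + berNorm k B ^ 2
        + (1 / 2 : ℝ) * ber k (adjoint A * A + adjoint B * B)
        + ber k (adjoint A * B) := by
    intro A B
    apply berNorm_sq_le' k hk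
    · have := berNorm_nonneg' k hk A
      have := berNorm_nonneg' k hk B
      have := ber_nonneg' k hk (adjoint A * A + adjoint B * B)
      have := ber_nonneg' k hk (adjoint A * B)
      positivity
    · intro lam mu
      have hcore := core' k hk A B lam mu
      have hprod : ‖A (k lam)‖ * ‖B (k lam)‖ ≤
          (1 / 2 : ℝ) * ber k (adjoint A * A + adjoint B * B) := by
        have hsum : ‖A (k lam)‖ ^ 2 + ‖B (k lam)‖ ^ 2 ≤
            ber k (adjoint A * A + adjoint B * B) := by
          have h2 := le_ber' k hk (adjoint A * A + adjoint B * B) lam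
          calc ‖A (k lam)‖ ^ 2 + ‖B (k lam)‖ ^ 2
              = RCLike.re (inner ℂ ((adjoint A * A + adjoint B * B) (k lam)) (k lam) : ℂ) := by
                rw [add_apply, inner_add_left, map_add, ContinuousLinearMap.mul_apply, ContinuousLinearMap.mul_apply,
                  adjoint_inner_left, adjoint_inner_left,
                  inner_self_eq_norm_sq, inner_self_eq_norm_sq]
            _ ≤ ‖(inner ℂ ((adjoint A * A + adjoint B * B) (k lam)) (k lam) : ℂ)‖ :=
                RCLike.re_le_norm _
            _ ≤ ber k (adjoint A * A + adjoint B * B) := h2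
        nlinarith [sq_nonneg (‖A (k lam)‖ - ‖B (k lam)‖)]
      linarith
  refine ⟨?_, main2 A B, ?_⟩
  · apply berNorm_sq_le' k hk
    · have := berNorm_nonneg' k hk A
      have := berNorm_nonneg' k hk B
      have := ber_nonneg' k hk (adjoint A * B)
      positivity
    · intro lam mu
      have hcore := core' k hk A B lam mu
      have hA := normAx_le k hk A lam
      have hB := normAx_le k hk B lam
      have hA' : ‖A (k lam)‖ ≤ Real.sqrt (ber k (adjoint A * A)) :=
        Real.le_sqrt_of_sq_le hA
      have hB' : ‖B (k lam)‖ ≤ Real.sqrt (ber k (adjoint B * B)) :=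
        Real.le_sqrt_of_sq_le hB
      have hprod : ‖A (k lam)‖ * ‖B (k lam)‖ ≤
          Real.sqrt (ber k (adjoint A * A)) * Real.sqrt (ber k (adjoint B * B)) := by
        apply mul_le_mul hA' hB' (norm_nonneg _) (Real.sqrt_nonneg _)
      linarith
  · have h3 := main2 (adjoint A) (adjoint B)
    rw [adjoint_adjoint, adjoint_adjoint] at h3
    have hsum : adjoint A + adjoint B = adjoint (A + B) := (map_add adjoint A B).symm
    rw [hsum, berNorm_adjoint' k hk, berNorm_adjoint' k hk, berNorm_adjoint' k hk] at h3
    exact h3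
end
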